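/- arXiv:2108.10256 — 3 statements merged into one kernel-verified Lean document; each statement's English description precedes it below -/
import Mathlib

section
/- Let U, V ⊆ ℂ be open sets and φ : U → V a conformal isomorphism (a bijective holomorphic map). Let A ⊆ U be a closed subset of ℂ with dist(A, ℂ \ U) > 0 and η := inf_{z∈A} |φ'(z)| > 0. Then there exists ε > 0 with the following property: for every holomorphic f : U → ℂ with |f(z) − φ(z)| ≤ ε for all z ∈ U, the map f is injective on A, f(A) ⊆ V, and |f'(z)| > η/2 for all z ∈ A; moreover, if |φ'| is bounded above on A, then |f'| is bounded above on A. -/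
open Set Filter Metric Topology
open scoped NNReal ENNReal

section AuxiliaryLemmas

/-- A holomorphic function on a ball has a primitive there. -/
lemma exists_primitive (h : ℂ → ℂ) (c : ℂ) (ρ : ℝ) (hρ : 0 < ρ)
    (hd : DifferentiableOn ℂ h (ball c ρ)) (v0 : ℂ) :
    ∃ H : ℂ → ℂ, H c = v0 ∧ ∀ z ∈ ball c ρ, HasDerivAt H (h z) z := by
  set p : FormalMultilinearSeries ℂ ℂ ℂ := cauchyPowerSeries h c (ρ/2).toNNReal with hp
  have key : ∀ r : ℝ≥0, 0 < r → (r : ℝ) < ρ → HasFPowerSeriesOnBall h p c r := by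
    intro r hr hrρ
    have h1 : DifferentiableOn ℂ h (closedBall c r) :=
      hd.mono (closedBall_subset_ball hrρ)
    have h2 := h1.hasFPowerSeriesOnBall hr
    have h3 : DifferentiableOn ℂ h (closedBall c (ρ/2).toNNReal) := by
      apply hd.mono (closedBall_subset_ball ?_)
      rw [Real.coe_toNNReal _ (by positivity)]; linarith
    have h4 := h3.hasFPowerSeriesOnBall (Real.toNNReal_pos.mpr (by positivity))
    rwa [h2.hasFPowerSeriesAt.eq_formalMultilinearSeries h4.hasFPowerSeriesAt] at h2
  refine ⟨fun z => v0 + ∑' n : ℕ, (p.coeff n / ((n : ℂ)+1)) * (z - c)^(n+1), by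
    simp [zero_pow (Nat.succ_ne_zero _)], ?_⟩
  intro z hz
  have hdz : dist z c < ρ := mem_ball.mp hz
  set t : ℝ := (dist z c + ρ)/2 with ht
  set s : ℝ := (dist z c + t)/2 with hs
  have hd0 : 0 ≤ dist z c := dist_nonneg
  have htρ : t < ρ := by rw [ht]; linarith
  have hst : s < t := by rw [hs]; linarith [hdz]
  have hzs : dist z c < s := by rw [hs]; linarith [hdz]
  have hs0 : 0 < s := by rw [hs, ht]; linarith
  have ht0 : 0 < t := by rw [ht]; linarith
  have hkey := key t.toNNReal (Real.toNNReal_pos.mpr ht0)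
    (by rw [Real.coe_toNNReal _ ht0.le]; exact htρ)
  have hrad : (s.toNNReal : ℝ≥0∞) < p.radius := by
    refine lt_of_lt_of_le ?_ hkey.r_le
    exact_mod_cast (Real.toNNReal_lt_toNNReal_iff ht0).mpr hst
  have hsum : Summable fun n : ℕ => ‖p n‖ * (s.toNNReal : ℝ)^n :=
    p.summable_norm_mul_pow hrad
  have hball : z ∈ ball c s := mem_ball.mpr hzs
  have hmain :
      HasDerivAt (fun y => ∑' n : ℕ, (p.coeff n / ((n : ℂ)+1)) * (y - c)^(n+1))
        (∑' n : ℕ, p.coeff n * (z - c)^n) z := by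
    refine hasDerivAt_tsum_of_isPreconnected hsum isOpen_ball
      ((convex_ball c s).isPreconnected) (g' := fun n y => p.coeff n * (y - c)^n)
      (fun n y _ => ?_) (fun n y hy => ?_) (mem_ball_self hs0) ?_ hball
    · have h1 : HasDerivAt (fun y : ℂ => (y - c) ^ (n + 1)) (((n:ℂ) + 1) * (y - c) ^ n) y := by
        have := ((hasDerivAt_id y).sub_const c).pow (n + 1)
        simpa [Pi.pow_def] using this
      have h2 := h1.const_mul (p.coeff n / ((n:ℂ)+1))
      have hne : ((n:ℂ)+1) ≠ 0 := Nat.cast_add_one_ne_zero n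
      have h3 : p.coeff n / ((n:ℂ)+1) * (((n:ℂ) + 1) * (y - c) ^ n) = p.coeff n * (y - c)^n := by
        rw [← mul_assoc, div_mul_cancel₀ _ hne]
      rw [h3] at h2
      exact h2
    · have hyc : ‖y - c‖ ≤ s := by
        rw [← dist_eq_norm]; exact (mem_ball.mp hy).le
      calc ‖p.coeff n * (y - c)^n‖ = ‖p.coeff n‖ * ‖y - c‖^n := by
            rw [norm_mul, norm_pow]
        _ ≤ ‖p n‖ * (s.toNNReal : ℝ)^n := by
            rw [p.norm_apply_eq_norm_coef]
            exact mul_le_mul_of_nonneg_left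
              (pow_le_pow_left₀ (norm_nonneg _)
                (by rwa [Real.coe_toNNReal _ hs0.le]) n) (norm_nonneg _)
    · refine summable_zero.congr fun n => ?_
      simp [sub_self, zero_pow (Nat.succ_ne_zero _)]
  have hval : (∑' n : ℕ, p.coeff n * (z - c)^n) = h z := by
    have hmem : z ∈ Metric.eball c ((t.toNNReal : ℝ≥0) : ℝ≥0∞) := by
      rw [Metric.eball_coe, mem_ball, Real.coe_toNNReal _ ht0.le]
      exact hzs.trans hst
    have h5 := hkey.hasSum_sub hmem
    simp only [FormalMultilinearSeries.apply_eq_pow_smul_coeff, smul_eq_mul] at h5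
    have heq : (fun n : ℕ => (z - c)^n * p.coeff n) = fun n : ℕ => p.coeff n * (z - c)^n := by
      funext n; ring
    rw [heq] at h5
    exact h5.tsum_eq
  rw [← hval]
  exact hmain.const_add v0

/-- If `h` is holomorphic on a ball with `‖h'‖ ≤ M` there and `h'(p) ≠ 0`, then the image of
the ball contains an explicit ball around `h p`. -/
lemma ball_subset_image_of_deriv_bound (h : ℂ → ℂ) (p : ℂ) (r M : ℝ) (hr : 0 < r)
    (hd : DifferentiableOn ℂ h (ball p r)) (hM : ∀ z ∈ ball p r, ‖deriv h z‖ ≤ M)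
    (hμ : 0 < ‖deriv h p‖) :
    ball (h p) (‖deriv h p‖^2 * r / (24 * M)) ⊆ h '' (ball p r) := by
  set μ : ℝ := ‖deriv h p‖ with hμdef
  have hpmem : p ∈ ball p r := mem_ball_self hr
  have hμM : μ ≤ M := hM p hpmem
  have hM0 : 0 < M := lt_of_lt_of_le hμ hμM
  -- the difference of derivatives
  set k : ℂ → ℂ := fun z => deriv h z - deriv h p with hk
  have hkd : DifferentiableOn ℂ k (ball p r) :=
    ((hd.analyticOnNhd isOpen_ball).deriv.differentiableOn).sub_const _
  have hkp : k p = 0 := sub_self _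
  have hmaps : MapsTo k (ball p r) (ball (k p) (3*M)) := by
    intro z hz
    rw [mem_ball, hkp, dist_eq_norm, sub_zero]
    calc ‖deriv h z - deriv h p‖ ≤ ‖deriv h z‖ + ‖deriv h p‖ := norm_sub_le _ _
      _ ≤ M + M := add_le_add (hM z hz) hμM
      _ < 3*M := by linarith
  have hschwarz : ∀ z ∈ ball p r, ‖deriv h z - deriv h p‖ ≤ 3*M/r * dist z p := by
    intro z hz
    have := Complex.dist_le_div_mul_dist_of_mapsTo_ball hkd (hmaps.mono_right ball_subset_closedBall) hz
    rwa [dist_eq_norm, hkp, sub_zero] at this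
  set δ : ℝ := μ * r / (6*M) with hδdef
  have hδ0 : 0 < δ := by positivity
  have hδr : δ < r := by
    rw [hδdef]
    rw [div_lt_iff₀ (by positivity)]
    nlinarith
  have hest : ∀ z ∈ closedBall p δ, ‖deriv h z - deriv h p‖ ≤ μ/2 := by
    intro z hz
    have hz' : z ∈ ball p r := lt_of_le_of_lt (mem_closedBall.mp hz) hδr
    calc ‖deriv h z - deriv h p‖ ≤ 3*M/r * dist z p := hschwarz z hz'
      _ ≤ 3*M/r * δ := by
          apply mul_le_mul_of_nonneg_left (mem_closedBall.mp hz) (by positivity)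
      _ = μ/2 := by rw [hδdef]; field_simp; ring
  -- mean value estimate for h z - h p - h'(p)(z-p)
  have hlin : ∀ z ∈ closedBall p δ, ‖h z - h p - deriv h p * (z - p)‖ ≤ μ/2 * ‖z - p‖ := by
    intro z hz
    have := Convex.norm_image_sub_le_of_norm_hasDerivWithin_le
      (f := fun y => h y - deriv h p * y) (f' := fun y => deriv h y - deriv h p)
      (C := μ/2) (s := closedBall p δ) (x := p) (y := z) ?_ hest (convex_closedBall p δ)
      (mem_closedBall_self hδ0.le) hz
    · calc ‖h z - h p - deriv h p * (z - p)‖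
          = ‖(h z - deriv h p * z) - (h p - deriv h p * p)‖ := by ring_nf
        _ ≤ μ/2 * ‖z - p‖ := this
    · intro y hy
      have hy' : y ∈ ball p r := lt_of_le_of_lt (mem_closedBall.mp hy) hδr
      have h1 : HasDerivAt h (deriv h y) y :=
        (hd.differentiableAt (isOpen_ball.mem_nhds hy')).hasDerivAt
      have h2 : HasDerivAt (fun y : ℂ => deriv h p * y) (deriv h p) y := by
        simpa using (hasDerivAt_id y).const_mul (deriv h p)
      exact (h1.sub h2).hasDerivWithinAt
  have hlow : ∀ z ∈ closedBall p δ, μ/2 * ‖z - p‖ ≤ ‖h z - h p‖ := by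
    intro z hz
    have h1 := hlin z hz
    have h2 : ‖deriv h p * (z - p)‖ = μ * ‖z - p‖ := by rw [norm_mul]
    have h3 := norm_sub_norm_le (deriv h p * (z - p)) (h z - h p)
    have h5 : ‖deriv h p * (z - p) - (h z - h p)‖ = ‖h z - h p - deriv h p * (z - p)‖ :=
      norm_sub_rev _ _
    linarith
  -- the sphere bound
  have hsphere : ∀ z ∈ sphere p δ, μ*δ/2 ≤ ‖h z - h p‖ := by
    intro z hz
    have hz' : z ∈ closedBall p δ := sphere_subset_closedBall hz
    have : ‖z - p‖ = δ := by rw [← dist_eq_norm]; exact mem_sphere.mp hz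
    have := hlow z hz'
    rw [‹‖z - p‖ = δ›] at this
    linarith
  -- frequently h z ≠ h p
  have hfreq : ∃ᶠ z in 𝓝 p, h z ≠ h p := by
    have h1 : ∀ᶠ z in 𝓝[≠] p, z ∈ closedBall p δ :=
      (eventually_of_mem (Metric.closedBall_mem_nhds p hδ0) fun x hx => hx).filter_mono
        nhdsWithin_le_nhds
    have h2 : ∀ᶠ z in 𝓝[≠] p, z ≠ p := self_mem_nhdsWithin
    have h3 : ∀ᶠ z in 𝓝[≠] p, h z ≠ h p := by
      filter_upwards [h1, h2] with z hz1 hz2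
      intro hcon
      have := hlow z hz1
      rw [hcon, sub_self, norm_zero] at this
      have : ‖z - p‖ ≤ 0 := by nlinarith [norm_nonneg (z - p)]
      exact hz2 (by simpa [sub_eq_zero] using le_antisymm this (norm_nonneg _))
    exact h3.frequently.filter_mono nhdsWithin_le_nhds
  -- apply the quantitative open mapping lemma
  have hdc : DiffContOnCl ℂ h (ball p δ) :=
    ⟨hd.mono (ball_subset_ball hδr.le),
     (hd.continuousOn).mono (by
       rw [closure_ball p hδ0.ne']
       exact closedBall_subset_ball hδr)⟩
  have himg := hdc.ball_subset_image_closedBall hδ0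
    (fun z hz => by simpa [dist_eq_norm] using hsphere z hz) hfreq
  have hsub : h '' closedBall p δ ⊆ h '' ball p r :=
    image_mono (closedBall_subset_ball hδr)
  refine subset_trans (fun x hx => ?_) (himg.trans hsub)
  have hrad : μ^2 * r / (24*M) = μ*δ/2/2 := by
    rw [hδdef]; field_simp; ring
  rwa [← hrad]

/-- **Bloch-type theorem**: the image of a holomorphic function on a ball contains some ball
of radius proportional to `R * ‖G'(c)‖`. -/
lemma bloch_ball (G : ℂ → ℂ) (c : ℂ) (R : ℝ) (hR : 0 < R)
    (hd : DifferentiableOn ℂ G (ball c R)) (hb : 0 < ‖deriv G c‖) :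
    ∃ q0 : ℂ, ball q0 (R * ‖deriv G c‖ / 192) ⊆ G '' (ball c R) := by
  set b : ℝ := ‖deriv G c‖ with hbdef
  have hKball : closedBall c (R/2) ⊆ ball c R := closedBall_subset_ball (by linarith)
  have hcont : ContinuousOn (deriv G) (closedBall c (R/2)) :=
    (((hd.analyticOnNhd isOpen_ball).deriv.differentiableOn).continuousOn).mono hKball
  set u : ℂ → ℝ := fun z => (R/2 - dist z c) * ‖deriv G z‖ with hu
  have hucont : ContinuousOn u (closedBall c (R/2)) :=
    ((continuous_const.sub (continuous_id.dist continuous_const)).continuousOn).mul hcont.norm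
  obtain ⟨p, hpK, hmax⟩ := (isCompact_closedBall c (R/2)).exists_isMaxOn
    ⟨c, mem_closedBall_self (by positivity)⟩ hucont
  have hmax' : ∀ z ∈ closedBall c (R/2), u z ≤ u p := hmax
  have hucval : u c = (R/2) * b := by
    show (R/2 - dist c c) * ‖deriv G c‖ = (R/2) * b
    rw [dist_self, sub_zero, hbdef]
  have hσ : 0 < u p := by
    have := hmax' c (mem_closedBall_self (by positivity))
    rw [hucval] at this
    nlinarith
  have hpc : dist p c < R/2 := by
    rcases lt_or_eq_of_le (mem_closedBall.mp hpK) with h | h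
    · exact h
    · exfalso
      have : u p = 0 := by
        show (R/2 - dist p c) * ‖deriv G p‖ = 0
        rw [h]; ring
      linarith
  set r0 : ℝ := (R/2 - dist p c)/2 with hr0def
  have hr0 : 0 < r0 := by rw [hr0def]; linarith
  have hsubK : ∀ z ∈ ball p r0, z ∈ closedBall c (R/2) ∧ r0 ≤ R/2 - dist z c := by
    intro z hz
    have h1 : dist z c ≤ dist z p + dist p c := dist_triangle z p c
    have h2 : dist z p < r0 := mem_ball.mp hz
    constructor
    · rw [mem_closedBall]; rw [hr0def] at h2; linarith
    · rw [hr0def] at h2 ⊢; linarith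
  have hsub : ball p r0 ⊆ ball c R := by
    intro z hz
    exact lt_of_le_of_lt (mem_closedBall.mp (hsubK z hz).1) (by linarith)
  have hMb : ∀ z ∈ ball p r0, ‖deriv G z‖ ≤ u p / r0 := by
    intro z hz
    obtain ⟨hzK, hzr⟩ := hsubK z hz
    have h1 : u z ≤ u p := hmax' z hzK
    rw [hu] at h1
    simp only at h1
    rw [le_div_iff₀ hr0]
    show ‖deriv G z‖ * r0 ≤ u p
    have h2 : u p = (R / 2 - dist p c) * ‖deriv G p‖ := rfl
    have h3 : 0 ≤ (R / 2 - dist z c - r0) * ‖deriv G z‖ :=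
      mul_nonneg (by linarith) (norm_nonneg _)
    linarith
  have hGp : ‖deriv G p‖ = u p / (2*r0) := by
    have h2 : u p = (2*r0) * ‖deriv G p‖ := by
      show (R/2 - dist p c) * ‖deriv G p‖ = (2*r0) * ‖deriv G p‖
      rw [hr0def]; ring
    rw [h2]; field_simp
  have hGp0 : 0 < ‖deriv G p‖ := by rw [hGp]; positivity
  have himg := ball_subset_image_of_deriv_bound G p r0 (u p / r0) hr0
    (hd.mono hsub) hMb hGp0
  refine ⟨G p, subset_trans (ball_subset_ball ?_) (himg.trans (image_mono hsub))⟩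
  -- R * b / 192 ≤ ‖deriv G p‖^2 * r0 / (24 * (u p / r0))
  have hub : R/2 * b ≤ u p := by rw [← hucval]; exact hmax' c (mem_closedBall_self (by positivity))
  rw [hGp]
  have h1 : (u p / (2*r0))^2 * r0 / (24 * (u p / r0)) = u p / 96 := by
    field_simp
    ring
  rw [h1]
  linarith

/-- **Weak Koebe theorem**: the image of a ball under an injective holomorphic map contains
an explicit ball around the image of the center. -/
lemma weak_koebe {φ : ℂ → ℂ} {z0 : ℂ} {ρ : ℝ} (hρ : 0 < ρ)
    (hd : DifferentiableOn ℂ φ (ball z0 ρ)) (hinj : Set.InjOn φ (ball z0 ρ)) :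
    ball (φ z0) (ρ * ‖deriv φ z0‖ / 2000) ⊆ φ '' (ball z0 ρ) := by
  intro w hw
  by_contra hnotin
  have hz0mem : z0 ∈ ball z0 ρ := mem_ball_self hρ
  have hwz0 : w ≠ φ z0 := by
    rintro rfl
    exact hnotin ⟨z0, hz0mem, rfl⟩
  set μ0 : ℝ := ‖deriv φ z0‖ with hμ0def
  have hdist : dist w (φ z0) < ρ * μ0 / 2000 := mem_ball.mp hw
  have hμ0 : 0 < μ0 := by
    rcases eq_or_lt_of_le (norm_nonneg (deriv φ z0)) with h | h
    · exfalso
      have : ρ * μ0 / 2000 = 0 := by rw [hμ0def, ← h]; ring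
      rw [this] at hdist
      exact absurd hdist (not_lt.mpr dist_nonneg)
    · exact h
  -- q is nonvanishing
  set q : ℂ → ℂ := fun z => φ z - w with hq
  have hqne : ∀ z ∈ ball z0 ρ, q z ≠ 0 := by
    intro z hz hcon
    exact hnotin ⟨z, hz, by rwa [← sub_eq_zero]⟩
  have hqd : DifferentiableOn ℂ q (ball z0 ρ) := hd.sub_const w
  -- the logarithmic derivative
  set h : ℂ → ℂ := fun z => deriv φ z / q z with hh
  have hhd : DifferentiableOn ℂ h (ball z0 ρ) :=
    ((hd.analyticOnNhd isOpen_ball).deriv.differentiableOn).div hqd hqne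
  obtain ⟨L, hLz0, hL⟩ := exists_primitive h z0 ρ hρ hhd (Complex.log (q z0))
  -- exp L = q on the ball
  have hderivAt : ∀ z ∈ ball z0 ρ, HasDerivAt φ (deriv φ z) z := fun z hz =>
    (hd.differentiableAt (isOpen_ball.mem_nhds hz)).hasDerivAt
  have hE : ∀ z ∈ ball z0 ρ, HasDerivWithinAt (fun z => q z * Complex.exp (-L z))
      0 (ball z0 ρ) z := by
    intro z hz
    have h1 : HasDerivAt q (deriv φ z) z := (hderivAt z hz).sub_const w
    have h2 : HasDerivAt (fun z => Complex.exp (-L z)) (Complex.exp (-L z) * (-h z)) z :=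
      (hL z hz).neg.cexp
    have h3 := h1.mul h2
    have h4 : deriv φ z * Complex.exp (-L z) + q z * (Complex.exp (-L z) * -h z) = 0 := by
      rw [hh]
      field_simp [hqne z hz]
      ring
    rw [h4] at h3
    exact h3.hasDerivWithinAt
  have hconst : ∀ z ∈ ball z0 ρ, q z * Complex.exp (-L z) = 1 := by
    intro z hz
    have h1 := Convex.norm_image_sub_le_of_norm_hasDerivWithin_le
      (f' := fun _ => (0:ℂ)) (C := 0) hE (fun y _ => by simp) (convex_ball z0 ρ) hz0mem hz
    have h2 : q z * Complex.exp (-L z) = q z0 * Complex.exp (-L z0) := by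
      rw [norm_sub_rev, zero_mul] at h1
      have := le_antisymm h1 (norm_nonneg _)
      rw [norm_eq_zero, sub_eq_zero] at this
      exact this.symm
    rw [h2, hLz0, Complex.exp_neg, Complex.exp_log (hqne z0 hz0mem)]
    exact mul_inv_cancel₀ (hqne z0 hz0mem)
  have hexpL : ∀ z ∈ ball z0 ρ, Complex.exp (L z) = q z := by
    intro z hz
    have := hconst z hz
    rw [Complex.exp_neg] at this
    exact ((mul_inv_eq_one₀ (Complex.exp_ne_zero _)).mp this).symm
  -- apply Bloch to G = L / (2π)
  set G : ℂ → ℂ := fun z => L z / (2 * Real.pi) with hG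
  have hGd : DifferentiableOn ℂ G (ball z0 ρ) := fun z hz =>
    (((hL z hz).differentiableAt).div_const _).differentiableWithinAt
  have hGderiv : HasDerivAt G (h z0 / (2 * Real.pi)) z0 := (hL z0 hz0mem).div_const _
  have hπ : (0:ℝ) < Real.pi := Real.pi_pos
  have hqz0 : ‖q z0‖ = dist w (φ z0) := by rw [hq, dist_comm, dist_eq_norm]
  have hqz0pos : 0 < ‖q z0‖ := by
    rw [hqz0, dist_pos]; exact hwz0
  have hGnorm : 1000 / (Real.pi * ρ) < ‖deriv G z0‖ := by
    rw [hGderiv.deriv, norm_div, hh, norm_div]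
    have h2π : ‖(2 * (Real.pi:ℂ) : ℂ)‖ = 2 * Real.pi := by
      simp [norm_mul, Complex.norm_real, _root_.abs_of_nonneg Real.pi_pos.le]
    rw [h2π]
    rw [div_div]
    rw [lt_div_iff₀ (by positivity)]
    have hq1 : ‖q z0‖ < ρ * μ0 / 2000 := by rw [hqz0]; exact hdist
    have hstep : 1000 / (Real.pi * ρ) * (‖q z0‖ * (2*Real.pi)) < μ0 := by
      calc 1000 / (Real.pi * ρ) * (‖q z0‖ * (2*Real.pi))
          = ‖q z0‖ * (2000 / ρ) := by field_simp; ring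
        _ < (ρ * μ0 / 2000) * (2000 / ρ) := by
            apply mul_lt_mul_of_pos_right hq1 (by positivity)
        _ = μ0 := by field_simp
    exact hstep
  have hGb : 0 < ‖deriv G z0‖ := lt_trans (by positivity) hGnorm
  obtain ⟨q0, hq0⟩ := bloch_ball G z0 ρ hρ hGd hGb
  -- the Bloch radius exceeds 1
  have hrad : 1 < ρ * ‖deriv G z0‖ / 192 := by
    have h1 : ρ * (1000 / (Real.pi * ρ)) < ρ * ‖deriv G z0‖ :=
      mul_lt_mul_of_pos_left hGnorm hρ
    have h2 : ρ * (1000 / (Real.pi * ρ)) = 1000 / Real.pi := by field_simp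
    have h3 : (250:ℝ) ≤ 1000 / Real.pi := by
      rw [le_div_iff₀ hπ]
      nlinarith [Real.pi_le_four]
    rw [h2] at h1
    rw [lt_div_iff₀ (by norm_num : (0:ℝ) < 192)]
    linarith
  -- two points in the image differing by I
  obtain ⟨a, ha, hGa⟩ := hq0 (mem_ball_self (by linarith))
  obtain ⟨b, hb, hGb'⟩ := hq0 (show q0 + Complex.I ∈ ball q0 (ρ * ‖deriv G z0‖ / 192) by
    rw [mem_ball, dist_eq_norm]
    simpa using hrad)
  have hπc : ((Real.pi:ℂ)) ≠ 0 := Complex.ofReal_ne_zero.mpr Real.pi_ne_zero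
  have hLab : L b - L a = 2 * (Real.pi:ℂ) * Complex.I := by
    have h1 : L b / (2*(Real.pi:ℂ)) - L a / (2*(Real.pi:ℂ)) = Complex.I := by
      rw [show L b / (2*(Real.pi:ℂ)) = G b from rfl,
        show L a / (2*(Real.pi:ℂ)) = G a from rfl, hGa, hGb']
      ring
    field_simp at h1
    linear_combination h1
  have hqab : q b = q a := by
    rw [← hexpL a ha, ← hexpL b hb]
    have h5 : L b = L a + 2 * (Real.pi:ℂ) * Complex.I := by linear_combination hLab
    rw [h5, Complex.exp_add, Complex.exp_two_pi_mul_I, mul_one]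
  have hab : b = a := hinj hb ha (by
    have := hqab
    rw [hq] at this
    simpa [sub_left_inj] using this)
  rw [hab] at hLab
  simp only [sub_self] at hLab
  have : (2 * (Real.pi:ℂ) * Complex.I : ℂ) ≠ 0 := by
    simp [mul_eq_zero, hπc, Complex.I_ne_zero]
  exact this hLab.symm

end AuxiliaryLemmas

/-- **Approximation of univalent functions.** -/
theorem stmt9 (U V : Set ℂ) (hU : IsOpen U) (hV : IsOpen V)
    (φ : ℂ → ℂ) (hφ : DifferentiableOn ℂ φ U) (hbij : Set.BijOn φ U V)
    (A : Set ℂ) (hA : IsClosed A) (hAU : A ⊆ U)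
    (d : ℝ) (hd : 0 < d) (hdist : ∀ a ∈ A, ∀ w ∉ U, d ≤ dist a w)
    (η : ℝ) (hη : 0 < η) (hηle : ∀ z ∈ A, η ≤ ‖deriv φ z‖) :
    ∃ ε > 0, ∀ f : ℂ → ℂ, DifferentiableOn ℂ f U →
      (∀ z ∈ U, ‖f z - φ z‖ ≤ ε) →
      Set.InjOn f A ∧ f '' A ⊆ V ∧
      (∀ z ∈ A, η / 2 < ‖deriv f z‖) ∧
      (∀ M : ℝ, (∀ z ∈ A, ‖deriv φ z‖ ≤ M) →
        ∃ M' : ℝ, ∀ z ∈ A, ‖deriv f z‖ ≤ M') := by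
  have hηle' : ∀ z ∈ A, η ≤ ‖deriv φ z‖ := by
    intro z hz; exact hηle z hz
  -- balls around points of A are inside U
  have hballU : ∀ z ∈ A, ball z d ⊆ U := by
    intro z hz x hx
    by_contra hxU
    exact absurd (mem_ball.mp hx) (not_lt.mpr (by rw [dist_comm]; exact hdist z hz x hxU))
  refine ⟨η * d / 20000, by positivity, ?_⟩
  intro f hfd hfε
  have hfε' : ∀ z ∈ U, ‖f z - φ z‖ ≤ η * d / 20000 := by
    intro z hz; exact hfε z hz
  set ε : ℝ := η * d / 20000 with hεdef
  have hε0 : 0 < ε := by positivity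
  set g : ℂ → ℂ := fun z => f z - φ z with hg
  have hgd : DifferentiableOn ℂ g U := hfd.sub hφ
  -- Schwarz-type bounds for g
  have hgmaps : ∀ z ∈ A, ∀ r : ℝ, 0 < r → ball z r ⊆ U →
      MapsTo g (ball z r) (ball (g z) (3*ε)) := by
    intro z hz r hr hsub x hx
    rw [mem_ball, dist_eq_norm]
    calc ‖g x - g z‖ ≤ ‖g x‖ + ‖g z‖ := norm_sub_le _ _
      _ ≤ ε + ε := add_le_add (hfε' x (hsub hx)) (hfε' z (hsub (mem_ball_self hr)))
      _ < 3*ε := by linarith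
  have hgderiv : ∀ z ∈ A, ‖deriv g z‖ ≤ 3*ε/d := by
    intro z hz
    exact Complex.norm_deriv_le_div_of_mapsTo_ball (hgd.mono (hballU z hz))
      ((hgmaps z hz d hd (hballU z hz)).mono_right ball_subset_closedBall) hd
  -- deriv f = deriv φ + deriv g
  have hderiveq : ∀ z ∈ A, deriv g z = deriv f z - deriv φ z := by
    intro z hz
    have h1 : DifferentiableAt ℂ f z := hfd.differentiableAt (hU.mem_nhds (hAU hz))
    have h2 : DifferentiableAt ℂ φ z := hφ.differentiableAt (hU.mem_nhds (hAU hz))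
    exact deriv_sub h1 h2
  -- Koebe estimates at points of A
  have hkoebe : ∀ z ∈ A, ∀ r : ℝ, 0 < r → r ≤ d →
      ball (φ z) (r * η / 2000) ⊆ φ '' (ball z r) := by
    intro z hz r hr hrd
    have hsub : ball z r ⊆ U := (ball_subset_ball hrd).trans (hballU z hz)
    have h1 := weak_koebe hr (hφ.mono hsub) (hbij.injOn.mono hsub)
    refine subset_trans (ball_subset_ball ?_) h1
    have := hηle' z hz
    have : r * η ≤ r * ‖deriv φ z‖ := by nlinarith
    linarith
  constructor
  · -- Injectivity on A
    intro z1 hz1 z2 hz2 hfeq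
    by_contra hne
    set t : ℝ := dist z1 z2 with htdef
    have ht0 : 0 < t := dist_pos.mpr hne
    have hφeq : ‖φ z1 - φ z2‖ = ‖g z2 - g z1‖ := by
      have : φ z1 - φ z2 = g z2 - g z1 := by
        rw [hg]; simp only; rw [← hfeq]; ring
      rw [this]
    -- Koebe lower bound at z2 with radius min t d... do two cases
    have hnotmem : ∀ r : ℝ, 0 < r → r ≤ t → r ≤ d → r * η / 2000 ≤ ‖φ z1 - φ z2‖ := by
      intro r hr hrt hrd
      have h1 := hkoebe z2 hz2 r hr hrd
      have h2 : φ z1 ∉ φ '' (ball z2 r) := by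
        rintro ⟨x, hx, hxeq⟩
        have hxU : x ∈ U := ((ball_subset_ball hrd).trans (hballU z2 hz2)) hx
        have hz1x : z1 = x := hbij.injOn (hAU hz1) hxU hxeq.symm
        have h3 : dist x z2 < r := mem_ball.mp hx
        rw [← hz1x] at h3
        have : t < r := by rw [htdef]; exact h3
        linarith
      have h4 : φ z1 ∉ ball (φ z2) (r * η / 2000) := fun hmem => h2 (h1 hmem)
      rw [mem_ball, dist_eq_norm] at h4
      linarith [not_lt.mp h4]
    rcases lt_or_ge t (d/2) with hcase | hcase
    · -- near case
      have h5 := hnotmem t ht0 le_rfl (by linarith)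
      have hz1mem : z1 ∈ ball z2 (d/2) := by
        rw [mem_ball]; rw [htdef] at hcase; exact hcase
      have hsub2 : ball z2 (d/2) ⊆ U := (ball_subset_ball (by linarith)).trans (hballU z2 hz2)
      have h6 := Complex.dist_le_div_mul_dist_of_mapsTo_ball (hgd.mono hsub2)
        ((hgmaps z2 hz2 (d/2) (by linarith) hsub2).mono_right ball_subset_closedBall) hz1mem
      rw [dist_eq_norm, dist_eq_norm] at h6
      have hεd : 3*ε/(d/2) = 3*η/10000 := by rw [hεdef]; field_simp; ring
      rw [hεd] at h6
      have h7 : ‖φ z1 - φ z2‖ ≤ 3*η/10000 * t := by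
        rw [hφeq, norm_sub_rev]
        rw [htdef]
        rwa [dist_eq_norm]
      nlinarith [mul_pos hη ht0]
    · -- far case
      have h5 := hnotmem (d/2) (by linarith) (by linarith) (by linarith)
      have h6 : ‖g z2 - g z1‖ ≤ 2*ε := by
        calc ‖g z2 - g z1‖ ≤ ‖g z2‖ + ‖g z1‖ := norm_sub_le _ _
          _ ≤ ε + ε := add_le_add (hfε' z2 (hAU hz2)) (hfε' z1 (hAU hz1))
          _ = 2*ε := by ring
      rw [hφeq] at h5
      rw [hεdef] at h6
      nlinarith [mul_pos hη hd]
  refine ⟨?_, ?_, ?_⟩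
  · -- f(A) ⊆ V
    rintro _ ⟨z, hz, rfl⟩
    have h1 := hkoebe z hz d hd le_rfl
    have h2 : f z ∈ ball (φ z) (d * η / 2000) := by
      rw [mem_ball, dist_eq_norm]
      calc ‖f z - φ z‖ ≤ ε := hfε' z (hAU hz)
        _ < d * η / 2000 := by rw [hεdef]; nlinarith
    obtain ⟨x, hx, hxeq⟩ := h1 h2
    rw [← hxeq, ← hbij.image_eq]
    exact ⟨x, hballU z hz hx, rfl⟩
  · -- derivative lower bound
    intro z hz
    have h1 := hgderiv z hz
    rw [hderiveq z hz] at h1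
    have h2 := hηle' z hz
    have h3 : ‖deriv φ z‖ - ‖deriv f z‖ ≤ ‖deriv f z - deriv φ z‖ := by
      have := norm_sub_norm_le (deriv φ z) (deriv f z)
      rwa [norm_sub_rev] at this
    have h4 : 3*ε/d = 3*η/20000 := by rw [hεdef]; field_simp
    rw [h4] at h1
    nlinarith
  · -- derivative upper bound
    intro M hM
    refine ⟨M + η, fun z hz => ?_⟩
    have h1 := hgderiv z hz
    rw [hderiveq z hz] at h1
    have h2 : ‖deriv f z‖ - ‖deriv φ z‖ ≤ ‖deriv f z - deriv φ z‖ :=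
      norm_sub_norm_le _ _
    have h3 : ‖deriv φ z‖ ≤ M := hM z hz
    have h4 : 3*ε/d = 3*η/20000 := by rw [hεdef]; field_simp
    rw [h4] at h1
    nlinarith
end

section
/- Let U ⊆ ℂ be open and g : U → ℂ holomorphic. Suppose G ⊆ U is open and K ⊆ G is a closed subset of ℂ such that for some n ≥ 1: (a) g^n is defined and univalent on G (i.e., g^k(G) ⊆ U for all k < n and g^n is injective on G); (b) |g'| is bounded above and below by positive constants on U; and (c) dist(K, ℂ \ G) > 0. Then for every ε > 0 there exists δ > 0 with the following property: for every holomorphic f : U → ℂ with |f(z) − g(z)| ≤ δ for all z ∈ U, the iterate f^n is defined and injective on K, |f^k(z) − g^k(z)| ≤ ε for all z ∈ K and k ≤ n, and |f'| is bounded above and below by positive constants on ⋃_{k=0}^{n−1} f^k(K). -/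
open Set Filter Metric Topology Finset

-- Cauchy estimate
lemma cauchyEst {F : ℂ → ℂ} {S : Set ℂ} (hF : DifferentiableOn ℂ F S)
    {w : ℂ} {r M : ℝ} (hr : 0 < r) (hsub : closedBall w r ⊆ S)
    (hM : ∀ x ∈ closedBall w r, ‖F x‖ ≤ M) : ‖deriv F w‖ ≤ M / r :=
  Complex.norm_deriv_le_of_forall_mem_sphere_norm_le hr (hF.diffContOnCl_ball hsub)
    (fun x hx => hM x (sphere_subset_closedBall hx))

-- iterate: differentiability and derivative product formula
lemma iterDeriv (f : ℂ → ℂ) (k : ℕ) (w : ℂ)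
    (h : ∀ j < k, DifferentiableAt ℂ f (f^[j] w)) :
    DifferentiableAt ℂ (f^[k]) w ∧
      deriv (f^[k]) w = ∏ j ∈ Finset.range k, deriv f (f^[j] w) := by
  induction k with
  | zero => simpa using differentiableAt_id
  | succ k ih =>
    obtain ⟨hd, hder⟩ := ih (fun j hj => h j (hj.trans (Nat.lt_succ_self k)))
    have hfd : DifferentiableAt ℂ f (f^[k] w) := h k (Nat.lt_succ_self k)
    constructor
    · rw [Function.iterate_succ']
      exact hfd.comp w hd
    · rw [Function.iterate_succ', deriv_comp (x := w) hfd hd, hder, Finset.prod_range_succ]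
      ring

lemma keyL {h : ℂ → ℂ} {z₀ : ℂ} {R μ M : ℝ} (hR : 0 < R) (hμ : 0 < μ)
    (hdiff : DifferentiableOn ℂ h (ball z₀ R))
    (hlow : μ ≤ ‖deriv h z₀‖)
    (hup : ∀ w ∈ ball z₀ R, ‖deriv h w‖ ≤ M) :
    InjOn h (closedBall z₀ (μ * R / (16 * M))) ∧
      closedBall (h z₀) (μ * (μ * R / (16 * M)) / 2) ⊆
        h '' (closedBall z₀ (μ * R / (16 * M))) := by
  have hzmem : z₀ ∈ ball z₀ R := mem_ball_self hR
  have hμM : μ ≤ M := hlow.trans (hup z₀ hzmem)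
  have hM : 0 < M := hμ.trans_le hμM
  set s : ℝ := μ * R / (16 * M) with hs_def
  have hs0 : 0 < s := by positivity
  have hsR : s ≤ R / 16 := by
    rw [hs_def, div_le_div_iff₀ (by positivity) (by norm_num)]
    nlinarith
  -- second derivative bound on closedBall z₀ (R/4)
  have hd1 : DifferentiableOn ℂ (deriv h) (ball z₀ R) :=
    ((hdiff.analyticOnNhd isOpen_ball).deriv).differentiableOn
  have hdd : ∀ w ∈ closedBall z₀ (R / 4), ‖deriv (deriv h) w‖ ≤ M / (R / 2) := by
    intro w hw
    have hbsub : closedBall w (R / 2) ⊆ ball z₀ R := by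
      intro x hx
      have : dist x z₀ < R := by
        calc dist x z₀ ≤ dist x w + dist w z₀ := dist_triangle _ _ _
        _ ≤ R / 2 + R / 4 := add_le_add (mem_closedBall.1 hx) (mem_closedBall.1 hw)
        _ < R := by linarith
      exact mem_ball.2 this
    exact cauchyEst hd1 (by positivity) hbsub (fun x hx => hup x (hbsub hx))
  -- oscillation of deriv h on closedBall z₀ s
  have hsub4 : closedBall z₀ s ⊆ closedBall z₀ (R / 4) :=
    closedBall_subset_closedBall (by linarith)
  have hosc : ∀ x ∈ closedBall z₀ s, ‖deriv h x - deriv h z₀‖ ≤ μ / 8 := by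
    intro x hx
    have hdiffAt : ∀ y ∈ closedBall z₀ s, DifferentiableAt ℂ (deriv h) y := by
      intro y hy
      have : y ∈ ball z₀ R := by
        have := mem_closedBall.1 hy
        exact mem_ball.2 (by linarith [hsR])
      exact hd1.differentiableAt (isOpen_ball.mem_nhds this)
    have := (convex_closedBall z₀ s).norm_image_sub_le_of_norm_deriv_le hdiffAt
      (fun y hy => hdd y (hsub4 hy)) (mem_closedBall_self hs0.le) hx
    calc ‖deriv h x - deriv h z₀‖ ≤ M / (R / 2) * ‖x - z₀‖ := this
    _ ≤ M / (R / 2) * s := by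
        apply mul_le_mul_of_nonneg_left _ (by positivity)
        rw [← dist_eq_norm]; exact mem_closedBall.1 hx
    _ = μ / 8 := by rw [hs_def]; field_simp; ring
  -- the linear approximation
  set a : ℂ := deriv h z₀ with ha_def
  have ha : a ≠ 0 := by
    intro h0
    rw [h0] at hlow; simp at hlow; linarith
  set A : ℂ ≃L[ℂ] ℂ := ContinuousLinearEquiv.unitsEquivAut ℂ (Units.mk0 a ha) with hA_def
  have hAapp : ∀ x : ℂ, A x = x * a := fun x => rfl
  have hdiffAt : ∀ y ∈ closedBall z₀ s, DifferentiableAt ℂ h y := by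
    intro y hy
    have : y ∈ ball z₀ R := by
      have := mem_closedBall.1 hy
      exact mem_ball.2 (by linarith [hsR])
    exact hdiff.differentiableAt (isOpen_ball.mem_nhds this)
  have happrox : ApproximatesLinearOn h (A : ℂ →L[ℂ] ℂ) (closedBall z₀ s)
      (Real.toNNReal (μ / 8)) := by
    intro x hx y hy
    have hφd : ∀ u ∈ closedBall z₀ s, DifferentiableAt ℂ (fun u => h u - u * a) u :=
      fun u hu => (hdiffAt u hu).sub (differentiableAt_id.mul (differentiableAt_const a))
    have hφderiv : ∀ u ∈ closedBall z₀ s, deriv (fun u => h u - u * a) u = deriv h u - a := by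
      intro u hu
      have hder : HasDerivAt (fun u => h u - u * a) (deriv h u - a) u := by
        exact (hdiffAt u hu).hasDerivAt.sub (hasDerivAt_mul_const a)
      exact hder.deriv
    have key := (convex_closedBall z₀ s).norm_image_sub_le_of_norm_deriv_le hφd
      (fun u hu => by rw [hφderiv u hu]; exact hosc u hu) hy hx
    have h1 : h x - x * a - (h y - y * a) = h x - h y - (A : ℂ →L[ℂ] ℂ) (x - y) := by
      have : (A : ℂ →L[ℂ] ℂ) (x - y) = (x - y) * a := rfl
      rw [this]; ring
    rw [← h1]
    calc ‖h x - x * a - (h y - y * a)‖ ≤ μ / 8 * ‖x - y‖ := key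
    _ = (Real.toNNReal (μ / 8) : ℝ) * ‖x - y‖ := by
        rw [Real.coe_toNNReal _ (by positivity)]
  -- norm of A.symm
  have hAsymm : ‖(A.symm : ℂ →L[ℂ] ℂ)‖ = ‖a‖⁻¹ := by
    have happ : ∀ x : ℂ, (A.symm : ℂ →L[ℂ] ℂ) x = x * a⁻¹ := fun x => rfl
    apply le_antisymm
    · apply ContinuousLinearMap.opNorm_le_bound _ (by positivity)
      intro x
      rw [happ, norm_mul, norm_inv, mul_comm]
    · have := (A.symm : ℂ →L[ℂ] ℂ).le_opNorm 1
      rw [happ 1, one_mul, norm_inv, norm_one, mul_one] at this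
      exact this
  have hNinv : (‖(A.symm : ℂ →L[ℂ] ℂ)‖₊)⁻¹ = ‖a‖₊ := by
    ext
    rw [NNReal.coe_inv, coe_nnnorm, hAsymm, inv_inv, coe_nnnorm]
  have hcond : Subsingleton ℂ ∨ (Real.toNNReal (μ / 8)) < (‖(A.symm : ℂ →L[ℂ] ℂ)‖₊)⁻¹ := by
    right
    rw [hNinv, ← NNReal.coe_lt_coe, Real.coe_toNNReal _ (by positivity), coe_nnnorm]
    calc μ / 8 < μ := by linarith
    _ ≤ ‖a‖ := hlow
  refine ⟨happrox.injOn hcond, ?_⟩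
  have hsurj := happrox.surjOn_closedBall_of_nonlinearRightInverse
    A.toNonlinearRightInverse hs0.le (subset_refl _)
  refine Subset.trans (closedBall_subset_closedBall ?_) hsurj
  have hnn : ((A.toNonlinearRightInverse.nnnorm : ℝ)⁻¹ : ℝ) = ‖a‖ := by
    have : (A.toNonlinearRightInverse.nnnorm : ℝ) = ‖(A.symm : ℂ →L[ℂ] ℂ)‖ := rfl
    rw [this, hAsymm, inv_inv]
  rw [hnn, Real.coe_toNNReal _ (by positivity)]
  have : μ / 2 ≤ ‖a‖ - μ / 8 := by
    have := hlow; linarith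
  calc μ * s / 2 = μ / 2 * s := by ring
  _ ≤ (‖a‖ - μ / 8) * s := mul_le_mul_of_nonneg_right this hs0.le
set_option maxHeartbeats 2000000 in
/-- **Approximating univalent iterates.** -/
theorem stmt11 (U : Set ℂ) (hU : IsOpen U) (g : ℂ → ℂ)
    (hg : DifferentiableOn ℂ g U)
    (G : Set ℂ) (hG : IsOpen G) (hGU : G ⊆ U)
    (K : Set ℂ) (hKcl : IsClosed K) (hKG : K ⊆ G)
    (n : ℕ) (hn : 1 ≤ n)
    (hdef : ∀ k < n, ∀ z ∈ G, g^[k] z ∈ U)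
    (hinj : Set.InjOn (g^[n]) G)
    (c C : ℝ) (hc : 0 < c)
    (hderiv : ∀ z ∈ U, c ≤ ‖deriv g z‖ ∧ ‖deriv g z‖ ≤ C)
    (d : ℝ) (hd : 0 < d) (hdist : ∀ z ∈ K, ∀ w ∉ G, d ≤ dist z w) :
    ∀ ε > 0, ∃ δ > 0, ∀ f : ℂ → ℂ, DifferentiableOn ℂ f U →
      (∀ z ∈ U, dist (f z) (g z) ≤ δ) →
      (∀ z ∈ K, ∀ j < n, f^[j] z ∈ U) ∧
      Set.InjOn (f^[n]) K ∧
      (∀ z ∈ K, ∀ k ≤ n, dist (f^[k] z) (g^[k] z) ≤ ε) ∧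
      (∃ c' C' : ℝ, 0 < c' ∧ ∀ k < n, ∀ z ∈ K,
        c' ≤ ‖deriv f (f^[k] z)‖ ∧
        ‖deriv f (f^[k] z)‖ ≤ C') := by
  intro ε hε
  rcases K.eq_empty_or_nonempty with hKe | hKne
  · exact ⟨1, one_pos, fun f hf hfg =>
      ⟨by simp [hKe], by simp [hKe], by simp [hKe], 1, 1, one_pos, by simp [hKe]⟩⟩
  -- basic constants
  set cc : ℝ := min c 1 with hcc_def
  set CC : ℝ := max C 1 with hCC_def
  have hcc : 0 < cc := lt_min hc one_pos
  have hcc1 : cc ≤ 1 := min_le_right _ _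
  have hCC1 : 1 ≤ CC := le_max_right _ _
  have hCC0 : 0 < CC := lt_of_lt_of_le one_pos hCC1
  have hderiv' : ∀ z ∈ U, cc ≤ ‖deriv g z‖ ∧ ‖deriv g z‖ ≤ CC := by
    intro z hz
    obtain ⟨h1, h2⟩ := hderiv z hz
    exact ⟨le_trans (min_le_left _ _) h1, le_trans h2 (le_max_left _ _)⟩
  -- geometry
  have hballG : ∀ z ∈ K, ∀ w ∈ closedBall z (d / 2), ball w (d / 2) ⊆ G := by
    intro z hz w hw x hx
    by_contra hxG
    have t := dist_triangle z w x
    have h1 : dist z w ≤ d / 2 := by rw [dist_comm]; exact mem_closedBall.1 hw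
    have h2 : dist w x < d / 2 := by rw [dist_comm]; exact mem_ball.1 hx
    linarith [hdist z hz x hxG]
  have hKself : ∀ z ∈ K, z ∈ closedBall z (d / 2) :=
    fun z _ => mem_closedBall_self (by positivity)
  -- g-iterate facts
  have hgdiffAt : ∀ w ∈ G, ∀ k, k ≤ n → DifferentiableAt ℂ (g^[k]) w ∧
      deriv (g^[k]) w = ∏ j ∈ Finset.range k, deriv g (g^[j] w) := by
    intro w hw k hk
    exact iterDeriv g k w (fun j hj =>
      hg.differentiableAt (hU.mem_nhds (hdef j (lt_of_lt_of_le hj hk) w hw)))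
  have hgbounds : ∀ w ∈ G, ∀ k, k ≤ n →
      cc ^ k ≤ ‖deriv (g^[k]) w‖ ∧ ‖deriv (g^[k]) w‖ ≤ CC ^ k := by
    intro w hw k hk
    obtain ⟨-, hprod⟩ := hgdiffAt w hw k hk
    rw [hprod, norm_prod]
    have hlo : ∀ j ∈ Finset.range k, cc ≤ ‖deriv g (g^[j] w)‖ := fun j hj =>
      (hderiv' _ (hdef j (lt_of_lt_of_le (Finset.mem_range.1 hj) hk) w hw)).1
    have hhi : ∀ j ∈ Finset.range k, ‖deriv g (g^[j] w)‖ ≤ CC := fun j hj =>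
      (hderiv' _ (hdef j (lt_of_lt_of_le (Finset.mem_range.1 hj) hk) w hw)).2
    constructor
    · have := Finset.prod_le_prod (s := Finset.range k) (f := fun _ => cc)
        (g := fun j => ‖deriv g (g^[j] w)‖) (fun _ _ => hcc.le) hlo
      simpa using this
    · have := Finset.prod_le_prod (s := Finset.range k)
        (f := fun j => ‖deriv g (g^[j] w)‖) (g := fun _ => CC)
        (fun j _ => norm_nonneg _) hhi
      simpa using this
  -- the uniform radius ρ
  set ρ : ℝ := cc ^ n * (cc ^ n * (d / 2) / (16 * CC ^ n)) / 2 with hρ_def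
  have hρ0 : 0 < ρ := by rw [hρ_def]; positivity
  have claimA : ∀ z ∈ K, ∀ w ∈ closedBall z (d / 2), ∀ k < n,
      closedBall (g^[k] w) ρ ⊆ U := by
    intro z hz w hw k hkn
    have hk : k ≤ n := hkn.le
    have hbG : ball w (d / 2) ⊆ G := hballG z hz w hw
    have hwG : w ∈ G := hbG (mem_ball_self (by positivity))
    have hdiffOn : DifferentiableOn ℂ (g^[k]) (ball w (d / 2)) := fun x hx =>
      ((hgdiffAt x (hbG hx) k hk).1).differentiableWithinAt
    obtain ⟨-, hsurj⟩ := keyL (by positivity : (0:ℝ) < d / 2)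
      (by positivity : (0:ℝ) < cc ^ k) hdiffOn
      (hgbounds w hwG k hk).1 (fun x hx => (hgbounds x (hbG hx) k hk).2)
    have hccCCk : cc ^ k ≤ CC ^ k := pow_le_pow_left₀ hcc.le (hcc1.trans hCC1) k
    have hskd : cc ^ k * (d / 2) / (16 * CC ^ k) < d / 2 := by
      rw [div_lt_iff₀ (by positivity)]
      have hA : cc ^ k * (d / 2) ≤ CC ^ k * (d / 2) :=
        mul_le_mul_of_nonneg_right hccCCk (by positivity)
      have hB : (0:ℝ) < CC ^ k * (d / 2) := by positivity
      nlinarith [hA, hB]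
    have himg : g^[k] '' (closedBall w (cc ^ k * (d / 2) / (16 * CC ^ k))) ⊆ U := by
      rintro - ⟨x, hx, rfl⟩
      have hxball : x ∈ ball w (d / 2) :=
        mem_ball.2 (lt_of_le_of_lt (mem_closedBall.1 hx) hskd)
      exact hdef k hkn x (hbG hxball)
    have hmono : ρ ≤ cc ^ k * (cc ^ k * (d / 2) / (16 * CC ^ k)) / 2 := by
      rw [hρ_def]
      have h1 : cc ^ n ≤ cc ^ k := pow_le_pow_of_le_one hcc.le hcc1 hk
      have h2 : CC ^ k ≤ CC ^ n := pow_le_pow_right₀ hCC1 hk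
      gcongr
    exact (closedBall_subset_closedBall hmono).trans (hsurj.trans himg)
  -- constants for f
  have hBn : (1:ℝ) ≤ ∑ j ∈ Finset.range n, CC ^ j := by
    have h0 : (0:ℕ) ∈ Finset.range n := Finset.mem_range.2 hn
    calc (1:ℝ) = CC ^ 0 := (pow_zero CC).symm
    _ ≤ ∑ j ∈ Finset.range n, CC ^ j :=
        Finset.single_le_sum (fun j _ => by positivity) h0
  set Bsum : ℝ := ∑ j ∈ Finset.range n, CC ^ j with hB_def
  have hB0 : 0 < Bsum := lt_of_lt_of_le one_pos hBn
  set sf : ℝ := (cc / 2) ^ n * (d / 2) / (16 * (CC + cc / 2) ^ n) with hsf_def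
  have hsf0 : 0 < sf := by rw [hsf_def]; positivity
  set s₂ : ℝ := cc ^ n * sf / (16 * CC ^ n) with hs2_def
  have hs₂0 : 0 < s₂ := by rw [hs2_def]; positivity
  set ρ₂ : ℝ := cc ^ n * s₂ / 2 with hρ2_def
  have hρ₂0 : 0 < ρ₂ := by rw [hρ2_def]; positivity
  set δ : ℝ := min (cc * ρ / 4) (min ε (min (ρ / 2) (ρ₂ / 4)) / Bsum) with hδ_def
  have hδ0 : 0 < δ :=
    lt_min (by positivity) (div_pos (lt_min hε (lt_min (by positivity) (by positivity))) hB0)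
  refine ⟨δ, hδ0, fun f hfdiff hfg => ?_⟩
  have hδB : δ * Bsum ≤ min ε (min (ρ / 2) (ρ₂ / 4)) := by
    have h1 : δ ≤ min ε (min (ρ / 2) (ρ₂ / 4)) / Bsum := min_le_right _ _
    calc δ * Bsum ≤ min ε (min (ρ / 2) (ρ₂ / 4)) / Bsum * Bsum :=
        mul_le_mul_of_nonneg_right h1 hB0.le
    _ = min ε (min (ρ / 2) (ρ₂ / 4)) := div_mul_cancel₀ _ hB0.ne'
  have hδε : δ * Bsum ≤ ε := hδB.trans (min_le_left _ _)
  have hδρ : δ * Bsum ≤ ρ / 2 := hδB.trans ((min_le_right _ _).trans (min_le_left _ _))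
  have hδρ₂ : δ * Bsum ≤ ρ₂ / 4 := hδB.trans ((min_le_right _ _).trans (min_le_right _ _))
  have hδcc : δ ≤ cc * ρ / 4 := min_le_left _ _
  have hsum_le_B : ∀ k, k ≤ n → (∑ j ∈ Finset.range k, CC ^ j) ≤ Bsum := by
    intro k hk
    rw [hB_def]
    exact Finset.sum_le_sum_of_subset_of_nonneg (Finset.range_subset_range.2 hk)
      (fun j _ _ => by positivity)
  -- orbit control
  have orbit : ∀ z ∈ K, ∀ w ∈ closedBall z (d / 2), ∀ k, k ≤ n →
      ‖f^[k] w - g^[k] w‖ ≤ δ * ∑ j ∈ Finset.range k, CC ^ j := by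
    intro z hz w hw k
    induction k with
    | zero => intro _; simp
    | succ k ih =>
      intro hk1
      have hkn : k < n := Nat.lt_of_succ_le hk1
      have hle := ih hkn.le
      have hek : ‖f^[k] w - g^[k] w‖ ≤ ρ / 2 := by
        calc ‖f^[k] w - g^[k] w‖ ≤ δ * ∑ j ∈ Finset.range k, CC ^ j := hle
        _ ≤ δ * Bsum := mul_le_mul_of_nonneg_left (hsum_le_B k hkn.le) hδ0.le
        _ ≤ ρ / 2 := hδρ
      have hfkB : f^[k] w ∈ closedBall (g^[k] w) ρ :=
        mem_closedBall.2 (by rw [dist_eq_norm]; linarith)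
      have hfkU : f^[k] w ∈ U := claimA z hz w hw k hkn hfkB
      have hlip : ‖g (f^[k] w) - g (g^[k] w)‖ ≤ CC * ‖f^[k] w - g^[k] w‖ := by
        have hsubU : closedBall (g^[k] w) ρ ⊆ U := claimA z hz w hw k hkn
        have := (convex_closedBall (g^[k] w) ρ).norm_image_sub_le_of_norm_deriv_le
          (fun x hx => hg.differentiableAt (hU.mem_nhds (hsubU hx)))
          (fun x hx => (hderiv' x (hsubU hx)).2)
          (mem_closedBall_self hρ0.le) hfkB
        exact this
      have h1 : ‖f (f^[k] w) - g (f^[k] w)‖ ≤ δ := by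
        rw [← dist_eq_norm]; exact hfg _ hfkU
      have heq2 : f^[k+1] w - g^[k+1] w =
          (f (f^[k] w) - g (f^[k] w)) + (g (f^[k] w) - g (g^[k] w)) := by
        rw [Function.iterate_succ_apply', Function.iterate_succ_apply']; ring
      calc ‖f^[k+1] w - g^[k+1] w‖
          ≤ ‖f (f^[k] w) - g (f^[k] w)‖ + ‖g (f^[k] w) - g (g^[k] w)‖ := by
            rw [heq2]; exact norm_add_le _ _
      _ ≤ δ + CC * (δ * ∑ j ∈ Finset.range k, CC ^ j) :=
          add_le_add h1 (hlip.trans (mul_le_mul_of_nonneg_left hle hCC0.le))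
      _ = δ * ∑ j ∈ Finset.range (k+1), CC ^ j := by rw [geom_sum_succ]; ring
  -- membership consequences
  have memU : ∀ z ∈ K, ∀ w ∈ closedBall z (d / 2), ∀ k < n,
      f^[k] w ∈ closedBall (g^[k] w) (ρ / 2) := by
    intro z hz w hw k hk
    have h1 := orbit z hz w hw k hk.le
    have : ‖f^[k] w - g^[k] w‖ ≤ ρ / 2 := by
      calc ‖f^[k] w - g^[k] w‖ ≤ δ * ∑ j ∈ Finset.range k, CC ^ j := h1
      _ ≤ δ * Bsum := mul_le_mul_of_nonneg_left (hsum_le_B k hk.le) hδ0.le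
      _ ≤ ρ / 2 := hδρ
    exact mem_closedBall.2 (by rw [dist_eq_norm]; linarith)
  have hfU : ∀ z ∈ K, ∀ w ∈ closedBall z (d / 2), ∀ j < n, f^[j] w ∈ U :=
    fun z hz w hw j hj => claimA z hz w hw j hj
      (closedBall_subset_closedBall (by linarith) (memU z hz w hw j hj))
  -- derivative bounds for f along orbits
  have derivf : ∀ z ∈ K, ∀ w ∈ closedBall z (d / 2), ∀ k < n,
      cc / 2 ≤ ‖deriv f (f^[k] w)‖ ∧ ‖deriv f (f^[k] w)‖ ≤ CC + cc / 2 := by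
    intro z hz w hw k hk
    have hx : f^[k] w ∈ closedBall (g^[k] w) (ρ / 2) := memU z hz w hw k hk
    have hsubU : closedBall (f^[k] w) (ρ / 2) ⊆ U := by
      intro y hy
      apply claimA z hz w hw k hk
      have := dist_triangle y (f^[k] w) (g^[k] w)
      exact mem_closedBall.2 (by
        linarith [mem_closedBall.1 hy, mem_closedBall.1 hx])
    have hxU : f^[k] w ∈ U := hsubU (mem_closedBall_self (by positivity))
    have hFdiff : DifferentiableOn ℂ (fun x => f x - g x) U := hfdiff.sub hg
    have hcau : ‖deriv (fun x => f x - g x) (f^[k] w)‖ ≤ δ / (ρ / 2) :=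
      cauchyEst hFdiff (by positivity) hsubU
        (fun x hxx => by rw [← dist_eq_norm]; exact hfg x (hsubU hxx))
    have hderiveq : deriv (fun x => f x - g x) (f^[k] w) =
        deriv f (f^[k] w) - deriv g (f^[k] w) :=
      deriv_sub (hfdiff.differentiableAt (hU.mem_nhds hxU))
        (hg.differentiableAt (hU.mem_nhds hxU))
    rw [hderiveq] at hcau
    have hδρcc : δ / (ρ / 2) ≤ cc / 2 := by
      rw [div_le_iff₀ (by positivity)]
      calc δ ≤ cc * ρ / 4 := hδcc
      _ = cc / 2 * (ρ / 2) := by ring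
    obtain ⟨hg1, hg2⟩ := hderiv' _ hxU
    have h3 := norm_sub_norm_le (deriv f (f^[k] w)) (deriv g (f^[k] w))
    have h4 := norm_sub_norm_le (deriv g (f^[k] w)) (deriv f (f^[k] w))
    rw [norm_sub_rev] at h4
    have h5 := hcau.trans hδρcc
    constructor <;> linarith
  -- f-iterate differentiability and derivative bounds
  have fiter : ∀ z ∈ K, ∀ w ∈ closedBall z (d / 2),
      DifferentiableAt ℂ (f^[n]) w ∧ (cc / 2) ^ n ≤ ‖deriv (f^[n]) w‖ ∧
        ‖deriv (f^[n]) w‖ ≤ (CC + cc / 2) ^ n := by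
    intro z hz w hw
    obtain ⟨hdAt, hprod⟩ := iterDeriv f n w (fun j hj =>
      hfdiff.differentiableAt (hU.mem_nhds (hfU z hz w hw j hj)))
    refine ⟨hdAt, ?_, ?_⟩
    · rw [hprod, norm_prod]
      have := Finset.prod_le_prod (s := Finset.range n) (f := fun _ => cc / 2)
        (g := fun j => ‖deriv f (f^[j] w)‖) (fun _ _ => by positivity)
        (fun j hj => (derivf z hz w hw j (Finset.mem_range.1 hj)).1)
      simpa [div_pow] using this
    · rw [hprod, norm_prod]
      have := Finset.prod_le_prod (s := Finset.range n)
        (f := fun j => ‖deriv f (f^[j] w)‖) (g := fun _ => CC + cc / 2)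
        (fun j _ => norm_nonneg _)
        (fun j hj => (derivf z hz w hw j (Finset.mem_range.1 hj)).2)
      simpa using this
  refine ⟨fun z hz j hj => hfU z hz z (hKself z hz) j hj, ?_, ?_, ?_⟩
  · -- injectivity
    intro z1 hz1 z2 hz2 heq
    have hfd : DifferentiableOn ℂ (f^[n]) (ball z1 (d / 2)) := fun x hx =>
      ((fiter z1 hz1 x (ball_subset_closedBall hx)).1).differentiableWithinAt
    obtain ⟨hinjf, -⟩ := keyL (by positivity : (0:ℝ) < d / 2)
      (by positivity : (0:ℝ) < (cc / 2) ^ n) hfd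
      (fiter z1 hz1 z1 (hKself z1 hz1)).2.1
      (fun x hx => (fiter z1 hz1 x (ball_subset_closedBall hx)).2.2)
    rw [← hsf_def] at hinjf
    -- sf < d/2
    have hccpow : (cc / 2) ^ n ≤ (CC + cc / 2) ^ n :=
      pow_le_pow_left₀ (by positivity) (by linarith) n
    have hsfd2 : sf < d / 2 := by
      rw [hsf_def, div_lt_iff₀ (by positivity)]
      have hA : (cc / 2) ^ n * (d / 2) ≤ (CC + cc / 2) ^ n * (d / 2) :=
        mul_le_mul_of_nonneg_right hccpow (by positivity)
      have hB : (0:ℝ) < (CC + cc / 2) ^ n * (d / 2) := by positivity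
      nlinarith [hA, hB]
    have hballsub : ball z1 sf ⊆ G := fun x hx =>
      hballG z1 hz1 z1 (hKself z1 hz1) (mem_ball.2 (lt_trans (mem_ball.1 hx) hsfd2))
    have hz1G : z1 ∈ G := hKG hz1
    have hgd : DifferentiableOn ℂ (g^[n]) (ball z1 sf) := fun x hx =>
      ((hgdiffAt x (hballsub hx) n le_rfl).1).differentiableWithinAt
    obtain ⟨-, hsurj⟩ := keyL hsf0 (by positivity : (0:ℝ) < cc ^ n) hgd
      (hgbounds z1 hz1G n le_rfl).1 (fun x hx => (hgbounds x (hballsub hx) n le_rfl).2)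
    rw [← hs2_def, ← hρ2_def] at hsurj
    have hccCCn : cc ^ n ≤ CC ^ n := pow_le_pow_left₀ hcc.le (hcc1.trans hCC1) n
    have hs2sf : s₂ < sf := by
      rw [hs2_def, div_lt_iff₀ (by positivity)]
      have hA : cc ^ n * sf ≤ CC ^ n * sf := mul_le_mul_of_nonneg_right hccCCn hsf0.le
      have hB : (0:ℝ) < CC ^ n * sf := by positivity
      nlinarith [hA, hB]
    by_cases hcase : dist z1 z2 ≤ s₂
    · exact hinjf (mem_closedBall_self hsf0.le)
        (mem_closedBall.2 (by rw [dist_comm]; linarith)) heq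
    · exfalso
      have hb1 := orbit z1 hz1 z1 (hKself z1 hz1) n le_rfl
      have hb2 := orbit z2 hz2 z2 (hKself z2 hz2) n le_rfl
      rw [← hB_def] at hb1 hb2
      have hgg : ‖g^[n] z2 - g^[n] z1‖ ≤ ρ₂ / 2 := by
        have heq3 : g^[n] z2 - g^[n] z1 =
            (f^[n] z1 - g^[n] z1) - (f^[n] z2 - g^[n] z2) := by rw [heq]; ring
        rw [heq3]
        calc ‖(f^[n] z1 - g^[n] z1) - (f^[n] z2 - g^[n] z2)‖
            ≤ ‖f^[n] z1 - g^[n] z1‖ + ‖f^[n] z2 - g^[n] z2‖ := norm_sub_le _ _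
        _ ≤ δ * Bsum + δ * Bsum := add_le_add hb1 hb2
        _ ≤ ρ₂ / 2 := by linarith
      have hmem : g^[n] z2 ∈ closedBall (g^[n] z1) ρ₂ :=
        mem_closedBall.2 (by rw [dist_eq_norm]; linarith [hρ₂0])
      obtain ⟨x, hx, hgx⟩ := hsurj hmem
      have hxG : x ∈ G := hballsub
        (mem_ball.2 (lt_of_le_of_lt (mem_closedBall.1 hx) hs2sf))
      have hxz2 : x = z2 := hinj hxG (hKG hz2) hgx
      rw [hxz2] at hx
      have : dist z1 z2 ≤ s₂ := by rw [dist_comm]; exact mem_closedBall.1 hx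
      exact hcase this
  · -- closeness of iterates
    intro z hz k hk
    rw [dist_eq_norm]
    calc ‖f^[k] z - g^[k] z‖ ≤ δ * ∑ j ∈ Finset.range k, CC ^ j :=
        orbit z hz z (hKself z hz) k hk
    _ ≤ δ * Bsum := mul_le_mul_of_nonneg_left (hsum_le_B k hk) hδ0.le
    _ ≤ ε := hδε
  · -- derivative bounds
    refine ⟨cc / 2, CC + cc / 2, by positivity, fun k hk z hz => ?_⟩
    exact derivf z hz z (hKself z hz) k hk
end

section
/- Let Φ(z) = 5z, and for j ≥ 0 let S_j = {z ∈ ℂ : 5^{j+1} − 1 < 4·Im z < 5^{j+1} + 3}, T_j = S_j + 2i, and S = ⋃_{j≥0} S_j. There exists ε > 0 with the following property. Suppose f : S → ℂ is holomorphic and |f(z) − Φ(z)| ≤ ε for all z ∈ S. Then |Re f(z)| > 4|Re z| for all z ∈ S with |Re z| ≥ 1. Furthermore, for every j ≥ 1 there is a domain V_j ⊆ S_0 such that f^j maps V_j conformally (bijectively and holomorphically) onto T_j, f^k(V_j) ⊆ S_k for k = 0, …, j−1, the real part Re z is unbounded from above and from below on V_j, and |f'| is bounded above and below by positive constants on ⋃_{k=0}^{j−1}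 f^k(V_j). -/
open Set Filter Metric Topology

/-- The horizontal strip S_j. -/
def Sstrip (j : ℕ) : Set ℂ :=
  {z | (5 : ℝ) ^ (j + 1) - 1 < 4 * z.im ∧ 4 * z.im < (5 : ℝ) ^ (j + 1) + 3}

/-- The horizontal strip T_j = S_j + 2i. -/
def Tstrip (j : ℕ) : Set ℂ := Set.image (fun w => w + 2 * Complex.I) (Sstrip j)

def Uset (k : ℕ) : Set ℂ :=
  {z | (5 : ℝ) ^ (k + 1) - 1/2 < 4 * z.im ∧ 4 * z.im < (5 : ℝ) ^ (k + 1) + 5/2}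

def Rset (k m : ℕ) : Set ℂ :=
  {z | (5 : ℝ) ^ (k + 1) + 7/5^m - 1/20 < 4 * z.im ∧
       4 * z.im < (5 : ℝ) ^ (k + 1) + 11/5^m + 1/20}

lemma Sstrip_open (j : ℕ) : IsOpen (Sstrip j) := by
  have : Sstrip j = (fun z : ℂ => 4 * z.im) ⁻¹' Ioo ((5:ℝ)^(j+1) - 1) ((5:ℝ)^(j+1) + 3) := rfl
  rw [this]
  exact isOpen_Ioo.preimage (continuous_const.mul Complex.continuous_im)

lemma Rset_open (k m : ℕ) : IsOpen (Rset k m) := by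
  have : Rset k m = (fun z : ℂ => 4 * z.im) ⁻¹' Ioo _ _ := rfl
  rw [this]
  exact isOpen_Ioo.preimage (continuous_const.mul Complex.continuous_im)

lemma S_open : IsOpen (⋃ j, Sstrip j) := isOpen_iUnion Sstrip_open

lemma Uset_subset (k : ℕ) : Uset k ⊆ Sstrip k := by
  intro z hz; exact ⟨by linarith [hz.1], by linarith [hz.2]⟩

lemma strip_convex (a b : ℝ) : Convex ℝ {z : ℂ | a < 4*z.im ∧ 4*z.im < b} := by
  have : {z : ℂ | a < 4*z.im ∧ 4*z.im < b}
      = {z : ℂ | a/4 < z.im} ∩ {z : ℂ | z.im < b/4} := by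
    ext z
    simp only [mem_setOf_eq, mem_inter_iff]
    constructor <;> intro h <;> constructor <;> linarith [h.1, h.2]
  rw [this]
  exact (convex_halfSpace_im_gt _).inter (convex_halfSpace_im_lt _)

lemma Uset_convex (k : ℕ) : Convex ℝ (Uset k) := strip_convex _ _

lemma Sstrip_convex (j : ℕ) : Convex ℝ (Sstrip j) := strip_convex _ _

lemma ball_Uset {k : ℕ} {z : ℂ} (hz : z ∈ Uset k) : ball z (1/8) ⊆ Sstrip k := by
  intro x hx
  rw [mem_ball, Complex.dist_eq] at hx
  have him : |x.im - z.im| ≤ ‖x - z‖ := by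
    simpa using Complex.abs_im_le_norm (x - z)
  rw [abs_le] at him
  exact ⟨by nlinarith [hz.1], by nlinarith [hz.2]⟩

lemma pow_five_ge {m : ℕ} (hm : 1 ≤ m) : (5:ℝ) ≤ 5^m := by
  calc (5:ℝ) = 5^1 := (pow_one 5).symm
  _ ≤ 5^m := pow_le_pow_right₀ (by norm_num) hm

lemma pow_five_pos (m : ℕ) : (0:ℝ) < 5^m := by positivity

lemma Rset_sub_Uset {k m : ℕ} (hm : 1 ≤ m) : Rset k m ⊆ Uset k := by
  intro z hz
  have h1 := pow_five_ge hm
  have h2 := pow_five_pos m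
  have h3 : 11/(5:ℝ)^m ≤ 11/5 := by
    apply div_le_div_of_nonneg_left (by norm_num) (by norm_num) h1
  have h4 : 0 < 7/(5:ℝ)^m := by positivity
  exact ⟨by linarith [hz.1], by linarith [hz.2]⟩

lemma Rset_sub_Sstrip {k m : ℕ} (hm : 1 ≤ m) : Rset k m ⊆ Sstrip k :=
  (Rset_sub_Uset hm).trans (Uset_subset k)

lemma im_div_five (w : ℂ) : (w / 5).im = w.im / 5 := by
  have : (w / 5) = w / ((5:ℝ):ℂ) := by norm_num
  rw [this, Complex.div_ofReal_im]

lemma Rset_pull {k m : ℕ} {w z : ℂ} (hw : w ∈ Rset (k+1) m)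
    (hz : z ∈ closedBall (w/5) (1/100)) : z ∈ Rset k (m+1) := by
  rw [mem_closedBall, Complex.dist_eq] at hz
  have him : |z.im - (w/5).im| ≤ ‖z - w/5‖ := by
    simpa using Complex.abs_im_le_norm (z - w/5)
  rw [im_div_five] at him
  rw [abs_le] at him
  obtain ⟨hw1, hw2⟩ := hw
  have e1 : (5:ℝ)^(k+1+1) = 5 * 5^(k+1) := by ring
  have e2 : (7:ℝ)/5^(m+1) = (7/5^m)/5 := by rw [pow_succ]; ring
  have e3 : (11:ℝ)/5^(m+1) = (11/5^m)/5 := by rw [pow_succ]; ring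
  rw [e1] at hw1 hw2
  constructor
  · rw [e2]; nlinarith
  · rw [e3]; nlinarith

lemma mem_Tstrip {j : ℕ} {z : ℂ} :
    z ∈ Tstrip j ↔ (5:ℝ)^(j+1) + 7 < 4 * z.im ∧ 4 * z.im < (5:ℝ)^(j+1) + 11 := by
  constructor
  · rintro ⟨w, hw, rfl⟩
    simp only [Complex.add_im, Complex.mul_im, Complex.I_im, Complex.I_re,
      Complex.re_ofNat, Complex.im_ofNat] at *
    constructor <;> [nlinarith [hw.1]; nlinarith [hw.2]]
  · intro hz
    refine ⟨z - 2 * Complex.I, ?_, by ring⟩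
    constructor <;>
      simp only [Complex.sub_im, Complex.mul_im, Complex.I_im, Complex.I_re,
        Complex.re_ofNat, Complex.im_ofNat] <;> nlinarith [hz.1, hz.2]

lemma Tstrip_open (j : ℕ) : IsOpen (Tstrip j) := by
  have : Tstrip j = (fun z : ℂ => 4 * z.im) ⁻¹' Ioo ((5:ℝ)^(j+1) + 7) ((5:ℝ)^(j+1) + 11) := by
    ext z; exact mem_Tstrip
  rw [this]
  exact isOpen_Ioo.preimage (continuous_const.mul Complex.continuous_im)

lemma Tstrip_sub_Rset (j : ℕ) : Tstrip j ⊆ Rset j 0 := by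
  intro z hz
  rw [mem_Tstrip] at hz
  constructor <;> simp only [pow_zero] <;> [linarith [hz.1]; linarith [hz.2]]

section anal
variable {f : ℂ → ℂ}
  (hfd : DifferentiableOn ℂ f (⋃ j, Sstrip j))
  (hfb : ∀ z ∈ ⋃ j, Sstrip j, ‖f z - 5 * z‖ ≤ 1/100)

lemma memS {k : ℕ} {z : ℂ} (hz : z ∈ Uset k) : z ∈ ⋃ j, Sstrip j :=
  mem_iUnion.mpr ⟨k, Uset_subset k hz⟩

include hfd in
lemma fdiffAt {z : ℂ} (hz : z ∈ ⋃ j, Sstrip j) : DifferentiableAt ℂ f z :=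
  hfd.differentiableAt (S_open.mem_nhds hz)

include hfd hfb in
lemma deriv_close {k : ℕ} {z : ℂ} (hz : z ∈ Uset k) :
    ‖deriv f z - 5‖ ≤ 1/4 := by
  set g : ℂ → ℂ := fun w => f w - 5 * w with hg
  have hballS : ball z (1/8) ⊆ ⋃ j, Sstrip j :=
    (ball_Uset hz).trans (subset_iUnion Sstrip k)
  have hgd : DifferentiableOn ℂ g (ball z (1/8)) := by
    apply DifferentiableOn.sub (hfd.mono hballS)
    exact (differentiable_const (5:ℂ)).mul differentiable_id |>.differentiableOn
  have hmaps : MapsTo g (ball z (1/8)) (ball (g z) (3/100)) := by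
    intro x hx
    rw [mem_ball, Complex.dist_eq]
    have h1 : ‖g x‖ ≤ 1/100 := hfb x (hballS hx)
    have h2 : ‖g z‖ ≤ 1/100 := hfb z (hballS (mem_ball_self (by norm_num)))
    calc ‖g x - g z‖ ≤ ‖g x‖ + ‖g z‖ :=
          (norm_sub_le _ _ : _)
      _ < 3/100 := by linarith
  have hS := Complex.norm_deriv_le_div_of_mapsTo_ball hgd (hmaps.mono_right ball_subset_closedBall) (by norm_num)
  have hdg : deriv g z = deriv f z - 5 := by
    have h1 : HasDerivAt f (deriv f z) z :=
      (fdiffAt hfd (hballS (mem_ball_self (by norm_num)))).hasDerivAt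
    have h2 : HasDerivAt (fun w : ℂ => 5 * w) 5 z := by
      simpa using (hasDerivAt_id z).const_mul (5:ℂ)
    have := (h1.sub h2).deriv
    exact this
  rw [hdg] at hS
  calc ‖deriv f z - 5‖ ≤ (3/100)/(1/8) := hS
    _ ≤ 1/4 := by norm_num

include hfd hfb in
lemma gdiff_le {k : ℕ} {a b : ℂ} (ha : a ∈ Uset k) (hb : b ∈ Uset k) :
    ‖(f a - 5*a) - (f b - 5*b)‖ ≤ (1/4) * ‖a - b‖ := by
  set g : ℂ → ℂ := fun w => f w - 5 * w with hg
  have hdiff : ∀ x ∈ Uset k, DifferentiableAt ℂ g x := by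
    intro x hx
    exact (fdiffAt hfd (memS hx)).sub ((differentiable_const (5:ℂ)).mul differentiable_id x)
  have hbound : ∀ x ∈ Uset k, ‖fderiv ℂ g x‖ ≤ 1/4 := by
    intro x hx
    rw [← norm_deriv_eq_norm_fderiv]
    have hdg : deriv g x = deriv f x - 5 := by
      have h1 : HasDerivAt f (deriv f x) x := (fdiffAt hfd (memS hx)).hasDerivAt
      have h2 : HasDerivAt (fun w : ℂ => 5 * w) 5 x := by
        simpa using (hasDerivAt_id x).const_mul (5:ℂ)
      exact (h1.sub h2).deriv
    rw [hdg]
    exact deriv_close hfd hfb hx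
  have := (Uset_convex k).norm_image_sub_le_of_norm_fderiv_le hdiff hbound hb ha
  simpa using this

include hfd hfb in
lemma expansion {k : ℕ} {a b : ℂ} (ha : a ∈ Uset k) (hb : b ∈ Uset k) :
    4 * ‖a - b‖ ≤ ‖f a - f b‖ := by
  have h1 := gdiff_le hfd hfb ha hb
  have h2 : (5:ℂ) * (a - b) = (f a - f b) + (-((f a - 5*a) - (f b - 5*b))) := by ring
  have h3 : ‖(5:ℂ) * (a-b)‖ = 5 * ‖a - b‖ := by
    rw [norm_mul]; norm_num
  have h4 := norm_add_le (f a - f b) (-((f a - 5*a) - (f b - 5*b)))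
  rw [← h2, h3, norm_neg] at h4
  linarith [norm_nonneg (a-b)]

include hfd hfb in
lemma f_inj {k : ℕ} {a b : ℂ} (ha : a ∈ Uset k) (hb : b ∈ Uset k)
    (hab : f a = f b) : a = b := by
  have := expansion hfd hfb ha hb
  rw [hab, sub_self, norm_zero] at this
  have : ‖a - b‖ = 0 := le_antisymm (by linarith) (by positivity)
  rw [norm_eq_zero, sub_eq_zero] at this
  exact this

end anal

section anal2
variable {f : ℂ → ℂ}
  (hfd : DifferentiableOn ℂ f (⋃ j, Sstrip j))
  (hfb : ∀ z ∈ ⋃ j, Sstrip j, ‖f z - 5 * z‖ ≤ 1/100)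

include hfd hfb in
lemma inv_exists {k : ℕ} {w : ℂ}
    (hball : closedBall (w/5) (1/100) ⊆ Uset k) :
    ∃ z ∈ closedBall (w/5) (1/100), f z = w := by
  set B := closedBall (w/5) (1/100) with hB
  have hBmem : (w/5 : ℂ) ∈ B := mem_closedBall_self (by norm_num)
  have hmaps : ∀ z ∈ B, (w - (f z - 5*z))/5 ∈ B := by
    intro z hz
    have h1 : ‖f z - 5*z‖ ≤ 1/100 := hfb z (memS (hball hz))
    rw [hB, mem_closedBall, Complex.dist_eq]
    have h2 : (w - (f z - 5*z))/5 - w/5 = -(f z - 5*z)/5 := by ring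
    rw [h2]
    rw [norm_div, norm_neg]
    have : ‖(5 : ℂ)‖ = 5 := by norm_num
    rw [this]
    linarith
  haveI : Nonempty B := ⟨⟨_, hBmem⟩⟩
  haveI : CompleteSpace B := isClosed_closedBall.completeSpace_coe
  set F : B → B := fun z => ⟨(w - (f z - 5*(z:ℂ)))/5, hmaps z z.2⟩ with hF
  have hcontr : ContractingWith (1/2 : NNReal) F := by
    constructor
    · norm_num [← NNReal.coe_lt_coe]
    · apply LipschitzWith.of_dist_le_mul
      intro a b
      rw [Subtype.dist_eq, Subtype.dist_eq]
      have h2 : ((w - (f a - 5*(a:ℂ)))/5) - ((w - (f b - 5*(b:ℂ)))/5)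
          = -(((f a - 5*(a:ℂ)) - (f b - 5*(b:ℂ)))/5) := by ring
      simp only [hF]
      rw [Complex.dist_eq, h2, norm_neg, norm_div]
      have h3 : ‖(5 : ℂ)‖ = 5 := by norm_num
      rw [h3]
      have h4 := gdiff_le hfd hfb (hball a.2) (hball b.2)
      have h5 : dist (a:ℂ) (b:ℂ) = ‖(a:ℂ) - (b:ℂ)‖ := Complex.dist_eq _ _
      have h6 : ((1/2 : NNReal) : ℝ) = 1/2 := by norm_num
      rw [h6, h5]
      have h7 := norm_nonneg ((a:ℂ) - (b:ℂ))
      linarith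
  set z := ContractingWith.fixedPoint F hcontr with hz
  have hfix : F z = z := hcontr.fixedPoint_isFixedPt
  have hval : (w - (f (z:ℂ) - 5*(z:ℂ)))/5 = (z:ℂ) := by
    have := congrArg Subtype.val hfix
    simpa [hF] using this
  refine ⟨(z:ℂ), z.2, ?_⟩
  have h5 : (5:ℂ) ≠ 0 := by norm_num
  field_simp at hval
  linear_combination -hval

end anal2

section anal3
variable {f : ℂ → ℂ}
  (hfd : DifferentiableOn ℂ f (⋃ j, Sstrip j))
  (hfb : ∀ z ∈ ⋃ j, Sstrip j, ‖f z - 5 * z‖ ≤ 1/100)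

include hfd hfb in
lemma key : ∀ n k : ℕ, ∃ Θ : ℂ → ℂ,
    (∀ w ∈ Rset (k+n) 0, f^[n] (Θ w) = w) ∧
    (∀ w ∈ Rset (k+n) 0, ∀ i ≤ n, f^[i] (Θ w) ∈ Rset (k+i) (n-i)) ∧
    ContinuousOn Θ (Rset (k+n) 0) ∧
    (∀ w ∈ Rset (k+n) 0, |(Θ w).re - w.re / 5^n| ≤ 1/2) := by
  -- set up the inverse branches
  have hinv : ∀ k : ℕ, ∀ w : ℂ, ∃ z : ℂ,
      closedBall (w/5) (1/100) ⊆ Uset k → z ∈ closedBall (w/5) (1/100) ∧ f z = w := by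
    intro k w
    by_cases h : closedBall (w/5) (1/100) ⊆ Uset k
    · obtain ⟨z, hz1, hz2⟩ := inv_exists hfd hfb h
      exact ⟨z, fun _ => ⟨hz1, hz2⟩⟩
    · exact ⟨0, fun hh => absurd hh h⟩
  choose ψ hψ using hinv
  have hballR : ∀ k m : ℕ, ∀ u ∈ Rset (k+1) m, closedBall (u/5) (1/100) ⊆ Uset k := by
    intro k m u hu x hx
    exact Rset_sub_Uset (Nat.succ_le_succ (Nat.zero_le m)) (Rset_pull hu hx)
  have hψ1 : ∀ k m : ℕ, ∀ u ∈ Rset (k+1) m, ψ k u ∈ Rset k (m+1) :=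
    fun k m u hu => Rset_pull hu (hψ k u (hballR k m u hu)).1
  have hψU : ∀ k m : ℕ, ∀ u ∈ Rset (k+1) m, ψ k u ∈ Uset k :=
    fun k m u hu => Rset_sub_Uset (Nat.succ_le_succ (Nat.zero_le m)) (hψ1 k m u hu)
  have hψ2 : ∀ k m : ℕ, ∀ u ∈ Rset (k+1) m, f (ψ k u) = u :=
    fun k m u hu => (hψ k u (hballR k m u hu)).2
  have hψcont : ∀ k m : ℕ, ContinuousOn (ψ k) (Rset (k+1) m) := by
    intro k m
    apply LipschitzOnWith.continuousOn (K := 1)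
    apply LipschitzOnWith.of_dist_le_mul
    intro u hu u' hu'
    have h4 := expansion hfd hfb (hψU k m u hu) (hψU k m u' hu')
    rw [hψ2 k m u hu, hψ2 k m u' hu'] at h4
    rw [Complex.dist_eq, Complex.dist_eq, NNReal.coe_one, one_mul]
    have h7 := norm_nonneg (ψ k u - ψ k u')
    linarith
  have hψre : ∀ k m : ℕ, ∀ u ∈ Rset (k+1) m, |(ψ k u).re - u.re/5| ≤ 1/500 := by
    intro k m u hu
    have hfψ := hψ2 k m u hu
    have h1 : (f (ψ k u)).re = 5*(ψ k u).re + (f (ψ k u) - 5*(ψ k u)).re := by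
      simp only [Complex.sub_re, Complex.mul_re, Complex.re_ofNat, Complex.im_ofNat]
      ring
    have h2 : |(f (ψ k u) - 5*(ψ k u)).re| ≤ 1/100 := by
      refine (Complex.abs_re_le_norm _).trans (hfb _ (memS (hψU k m u hu)))
    rw [hfψ] at h1 h2
    rw [abs_le] at h2 ⊢
    constructor <;> [linarith [h1, h2.1, h2.2]; linarith [h1, h2.1, h2.2]]
  intro n
  induction n with
  | zero =>
    intro k
    refine ⟨id, ?_, ?_, continuousOn_id, ?_⟩
    · intro w hw; simp
    · intro w hw i hi
      interval_cases i
      simpa using hw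
    · intro w hw; simp
  | succ n ih =>
    intro k
    obtain ⟨Θ, hA, hB, hC, hD⟩ := ih (k+1)
    have ekn : k + (n+1) = (k+1) + n := by omega
    have hmem : ∀ w ∈ Rset (k+(n+1)) 0, Θ w ∈ Rset (k+1) n := by
      intro w hw
      rw [ekn] at hw
      simpa using hB w hw 0 (Nat.zero_le n)
    refine ⟨fun w => ψ k (Θ w), ?_, ?_, ?_, ?_⟩
    · intro w hw
      rw [Function.iterate_succ_apply, hψ2 k n (Θ w) (hmem w hw)]
      rw [ekn] at hw
      exact hA w hw
    · intro w hw i hi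
      match i with
      | 0 =>
        simpa using hψ1 k n (Θ w) (hmem w hw)
      | (i'+1) =>
        rw [Function.iterate_succ_apply, hψ2 k n (Θ w) (hmem w hw)]
        have e1 : k + (i'+1) = (k+1) + i' := by omega
        have e2 : n + 1 - (i'+1) = n - i' := by omega
        rw [e1, e2]
        rw [ekn] at hw
        exact hB w hw i' (by omega)
    · rw [ekn]
      refine (hψcont k n).comp hC ?_
      intro w hw
      rw [← ekn] at hw
      exact hmem w hw
    · intro w hw
      have h1 := hψre k n (Θ w) (hmem w hw)
      have h2 : |(Θ w).re - w.re / 5^n| ≤ 1/2 := by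
        rw [ekn] at hw
        exact hD w hw
      have e2 : w.re/5^(n+1) = (w.re/5^n)/5 := by rw [pow_succ]; ring
      rw [e2]
      rw [abs_le] at h1 h2 ⊢
      constructor <;> [linarith [h1.1, h2.1]; linarith [h1.2, h2.2]]

end anal3


/-- **The scaffolding lemma.** -/
theorem stmt13 :
    ∃ ε > 0, ∀ f : ℂ → ℂ,
      DifferentiableOn ℂ f (⋃ j, Sstrip j) →
      (∀ z ∈ ⋃ j, Sstrip j, ‖f z - 5 * z‖ ≤ ε) →
      (∀ z ∈ ⋃ j, Sstrip j, 1 ≤ |z.re| → 4 * |z.re| < |(f z).re|) ∧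
      (∀ j : ℕ, 1 ≤ j → ∃ V : Set ℂ, V ⊆ Sstrip 0 ∧ IsOpen V ∧ IsConnected V ∧
        Set.BijOn (f^[j]) V (Tstrip j) ∧
        (∀ k < j, f^[k] '' V ⊆ Sstrip k) ∧
        (∀ M : ℝ, ∃ z ∈ V, M < z.re) ∧
        (∀ M : ℝ, ∃ z ∈ V, z.re < M) ∧
        (∃ c C : ℝ, 0 < c ∧ ∀ k < j, ∀ z ∈ V,
          c ≤ ‖deriv f (f^[k] z)‖ ∧
          ‖deriv f (f^[k] z)‖ ≤ C)) := by
  refine ⟨1/100, by norm_num, ?_⟩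
  intro f hfd hfb
  constructor
  · -- first part
    intro z hz hre
    have hb := hfb z hz
    have h1 : (f z).re = 5 * z.re + (f z - 5*z).re := by
      simp only [Complex.sub_re, Complex.mul_re, Complex.re_ofNat, Complex.im_ofNat]
      ring
    have h2 : |(f z - 5*z).re| ≤ 1/100 := (Complex.abs_re_le_norm _).trans hb
    have h3 := abs_sub_abs_le_abs_sub (5*z.re) (-(f z - 5*z).re)
    rw [abs_neg, sub_neg_eq_add] at h3
    have h4 : |(5:ℝ)*z.re| = 5*|z.re| := by rw [abs_mul]; norm_num
    rw [h4] at h3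
    rw [h1]
    linarith
  · -- second part
    intro j hj
    obtain ⟨Θ, hA, hB, hC, hD⟩ := key hfd hfb j 0
    simp only [zero_add] at hA hB hC hD
    have hTsub := Tstrip_sub_Rset j
    set V : Set ℂ := Θ '' (Tstrip j) with hV
    set W : Set ℂ := {z : ℂ | f^[j] z ∈ Tstrip j ∧ ∀ i < j, f^[i] z ∈ Rset i (j - i)}
      with hW
    have hVW : V = W := by
      apply Subset.antisymm
      · rintro _ ⟨w, hw, rfl⟩
        exact ⟨by rw [hA w (hTsub hw)]; exact hw, fun i hi => hB w (hTsub hw) i hi.le⟩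
      · intro z hz
        have hwT : f^[j] z ∈ Tstrip j := hz.1
        have hkey : ∀ m, m ≤ j → f^[j-m] z = f^[j-m] (Θ (f^[j] z)) := by
          intro m
          induction m with
          | zero =>
            intro _
            simp only [Nat.sub_zero]
            rw [hA _ (hTsub hwT)]
          | succ m ihm =>
            intro hm
            have hi : j - (m+1) < j := by omega
            have hi1 : (j - (m+1)).succ = j - m := by omega
            have ha' : f^[j-(m+1)] z ∈ Rset (j-(m+1)) (j - (j-(m+1))) := hz.2 _ hi
            have hb' : f^[j-(m+1)] (Θ (f^[j] z)) ∈ Rset (j-(m+1)) (j - (j-(m+1))) :=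
              hB _ (hTsub hwT) _ hi.le
            have hU1 : f^[j-(m+1)] z ∈ Uset (j-(m+1)) := Rset_sub_Uset (by omega) ha'
            have hU2 : f^[j-(m+1)] (Θ (f^[j] z)) ∈ Uset (j-(m+1)) :=
              Rset_sub_Uset (by omega) hb'
            apply f_inj hfd hfb hU1 hU2
            rw [← Function.iterate_succ_apply' f (j-(m+1)) z,
              ← Function.iterate_succ_apply' f (j-(m+1)) (Θ (f^[j] z)), hi1]
            exact ihm (by omega)
        have hzz := hkey j le_rfl
        rw [Nat.sub_self] at hzz
        simp only [Function.iterate_zero_apply] at hzz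
        exact ⟨f^[j] z, hwT, hzz.symm⟩
    have hWopen : IsOpen W := by
      rw [isOpen_iff_mem_nhds]
      intro z hz
      have hcont : ∀ i, i ≤ j → ContinuousAt (f^[i]) z := by
        intro i
        induction i with
        | zero => intro _; simpa using continuousAt_id
        | succ i ihc =>
          intro hi
          have hmemS : f^[i] z ∈ ⋃ j', Sstrip j' :=
            mem_iUnion.mpr ⟨i, Rset_sub_Sstrip (by omega) (hz.2 i (by omega))⟩
          have : f^[i+1] = f ∘ f^[i] := Function.iterate_succ' f i
          rw [this]
          exact ((hfd.differentiableAt (S_open.mem_nhds hmemS)).continuousAt).comp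
            (ihc (by omega))
      have h1 : (f^[j]) ⁻¹' (Tstrip j) ∈ 𝓝 z :=
        (hcont j le_rfl).preimage_mem_nhds ((Tstrip_open j).mem_nhds hz.1)
      have h3 : (⋂ i ∈ Finset.range j, (f^[i]) ⁻¹' (Rset i (j - i))) ∈ 𝓝 z := by
        rw [Filter.biInter_finset_mem]
        intro i hi
        exact (hcont i (Finset.mem_range.mp hi).le).preimage_mem_nhds
          ((Rset_open _ _).mem_nhds (hz.2 i (Finset.mem_range.mp hi)))
      filter_upwards [h1, h3] with x hx1 hx3
      refine ⟨hx1, fun i hi => ?_⟩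
      simp only [mem_iInter, mem_preimage] at hx3
      exact hx3 i (Finset.mem_range.mpr hi)
    refine ⟨V, ?_, ?_, ?_, ?_, ?_, ?_, ?_, ?_⟩
    · -- V ⊆ Sstrip 0
      rintro _ ⟨w, hw, rfl⟩
      have h := hB w (hTsub hw) 0 (Nat.zero_le j)
      simp only [Function.iterate_zero_apply, Nat.sub_zero] at h
      exact Rset_sub_Sstrip hj h
    · exact hVW ▸ hWopen
    · -- connected
      have hSconn : IsConnected (Sstrip j) := by
        apply Convex.isConnected (Sstrip_convex j)
        refine ⟨(((5:ℝ)^(j+1)/4 : ℝ) * Complex.I : ℂ), ?_, ?_⟩ <;>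
        · simp only [Complex.mul_im, Complex.ofReal_re, Complex.ofReal_im,
            Complex.I_im, Complex.I_re]
          ring_nf
          linarith [pow_five_pos (j+1)]
      have hTconn : IsConnected (Tstrip j) :=
        hSconn.image _ (Continuous.continuousOn (by continuity))
      exact hTconn.image Θ (hC.mono hTsub)
    · -- BijOn
      refine ⟨?_, ?_, ?_⟩
      · rintro _ ⟨w, hw, rfl⟩
        rw [hA w (hTsub hw)]; exact hw
      · rintro a ⟨w, hw, rfl⟩ b ⟨w', hw', rfl⟩ hab
        rw [hA w (hTsub hw), hA w' (hTsub hw')] at hab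
        rw [hab]
      · intro w hw
        exact ⟨Θ w, mem_image_of_mem Θ hw, hA w (hTsub hw)⟩
    · -- strips
      intro k hk
      rintro _ ⟨z, ⟨w, hw, rfl⟩, rfl⟩
      exact Rset_sub_Sstrip (by omega) (hB w (hTsub hw) k hk.le)
    · -- unbounded above
      intro M
      set w : ℂ := (((5:ℝ)^j * (M+2) : ℝ) : ℂ) + ((((5:ℝ)^(j+1)+9)/4 : ℝ) : ℂ) * Complex.I
        with hw
      have hwim : w.im = ((5:ℝ)^(j+1)+9)/4 := by
        simp only [hw, Complex.add_im, Complex.mul_im, Complex.ofReal_re,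
          Complex.ofReal_im, Complex.I_im, Complex.I_re]
        ring
      have hwre : w.re = (5:ℝ)^j * (M+2) := by
        simp only [hw, Complex.add_re, Complex.mul_re, Complex.ofReal_re,
          Complex.ofReal_im, Complex.I_im, Complex.I_re]
        ring
      have hwT : w ∈ Tstrip j := by
        rw [mem_Tstrip, hwim]
        constructor <;> linarith
      refine ⟨Θ w, mem_image_of_mem Θ hwT, ?_⟩
      have hd := hD w (hTsub hwT)
      rw [hwre] at hd
      have h5 : (5:ℝ)^j * (M+2) / 5^j = M + 2 := by
        field_simp
      rw [h5, abs_le] at hd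
      linarith [hd.1]
    · -- unbounded below
      intro M
      set w : ℂ := (((5:ℝ)^j * (M-2) : ℝ) : ℂ) + ((((5:ℝ)^(j+1)+9)/4 : ℝ) : ℂ) * Complex.I
        with hw
      have hwim : w.im = ((5:ℝ)^(j+1)+9)/4 := by
        simp only [hw, Complex.add_im, Complex.mul_im, Complex.ofReal_re,
          Complex.ofReal_im, Complex.I_im, Complex.I_re]
        ring
      have hwre : w.re = (5:ℝ)^j * (M-2) := by
        simp only [hw, Complex.add_re, Complex.mul_re, Complex.ofReal_re,
          Complex.ofReal_im, Complex.I_im, Complex.I_re]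
        ring
      have hwT : w ∈ Tstrip j := by
        rw [mem_Tstrip, hwim]
        constructor <;> linarith
      refine ⟨Θ w, mem_image_of_mem Θ hwT, ?_⟩
      have hd := hD w (hTsub hwT)
      rw [hwre] at hd
      have h5 : (5:ℝ)^j * (M-2) / 5^j = M - 2 := by
        field_simp
      rw [h5, abs_le] at hd
      linarith [hd.2]
    · -- derivative bounds
      refine ⟨4, 6, by norm_num, ?_⟩
      intro k hk z hzV
      obtain ⟨w, hw, rfl⟩ := hzV
      have hU : f^[k] (Θ w) ∈ Uset k := Rset_sub_Uset (by omega) (hB w (hTsub hw) k hk.le)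
      have h1 := deriv_close hfd hfb hU
      set d := deriv f (f^[k] (Θ w)) with hd
      have h2 : ‖(5:ℂ)‖ ≤ ‖(5:ℂ) - d‖ + ‖d‖ := by
        calc ‖(5:ℂ)‖ = ‖((5:ℂ) - d) + d‖ := by ring_nf
        _ ≤ _ := norm_add_le _ _
      have h3 : ‖(5:ℂ) - d‖ = ‖d - 5‖ := by
        rw [← norm_neg]; ring_nf
      have h4 : ‖d‖ ≤ ‖d - 5‖ + ‖(5:ℂ)‖ := by
        calc ‖d‖ = ‖(d - 5) + 5‖ := by ring_nf
        _ ≤ _ := norm_add_le _ _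
      have h5 : ‖(5:ℂ)‖ = 5 := by norm_num
      rw [h5] at h2 h4
      rw [h3] at h2
      constructor <;> linarith
end
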